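/- arXiv:1103.2310 — 6 statements merged into one kernel-verified Lean document; each statement's English description precedes it below -/
import Mathlib

section
/- Let X be an integrable adapted stochastic process on a filtered probability space, and let H be a sub-σ-algebra of F_0. Suppose X has H-conditionally independent increments (for all s ≤ t, the increment X_t − X_s is independent of F_s conditionally on H) and H-conditionally symmetric increments (E[f(X_t − X_s) | H] = E[f(X_s − X_t) | H] for all bounded measurable f). Then X is a martingale. -/
open MeasureTheory ProbabilityTheory Filter

/-- A process with `H`-conditionally independent and `H`-conditionally symmetric
increments, which is integrable and adapted, is a martingale. -/
theorem martingale_of_condIndep_condSymm_increments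
    {Ω : Type*} {m0 : MeasurableSpace Ω} {μ : Measure Ω} [IsProbabilityMeasure μ]
    (ℱ : Filtration ℝ m0) (H : MeasurableSpace Ω) (hH : H ≤ ℱ 0)
    (X : ℝ → Ω → ℝ)
    (hadapted : Adapted ℱ X)
    (hint : ∀ t : ℝ, Integrable (X t) μ)
    (hindep : ∀ s t : ℝ, s ≤ t → ∀ f : ℝ → ℝ, Measurable f → (∃ C, ∀ x, |f x| ≤ C) →
      ∀ Z : Ω → ℝ, StronglyMeasurable[ℱ s] Z → (∃ C, ∀ ω, |Z ω| ≤ C) →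
      μ[fun ω => f (X t ω - X s ω) * Z ω | H]
        =ᵐ[μ] fun ω => (μ[fun ω' => f (X t ω' - X s ω') | H]) ω * (μ[Z | H]) ω)
    (hsymm : ∀ s t : ℝ, ∀ f : ℝ → ℝ, Measurable f → (∃ C, ∀ x, |f x| ≤ C) →
      μ[fun ω => f (X t ω - X s ω) | H] =ᵐ[μ] μ[fun ω => f (X s ω - X t ω) | H]) :
    Martingale X ℱ μ := by
  have hHm0 : H ≤ m0 := hH.trans (ℱ.le 0)
  refine ⟨hadapted.stronglyAdapted, fun s t hst => ?_⟩
  set D : Ω → ℝ := fun ω => X t ω - X s ω with hD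
  have hDint : Integrable D μ := (hint t).sub (hint s)
  have hDsm : StronglyMeasurable[m0] D :=
    ((hadapted t).stronglyMeasurable.mono (ℱ.le t)).sub ((hadapted s).stronglyMeasurable.mono (ℱ.le s))
  -- truncation
  set f : ℕ → ℝ → ℝ := fun n x => if |x| ≤ n then x else 0 with hf
  have hfmeas : ∀ n, Measurable (f n) := fun n =>
    Measurable.ite (measurableSet_le measurable_abs measurable_const)
      measurable_id measurable_const
  have hfbdd : ∀ n, ∃ C, ∀ x, |f n x| ≤ C := by
    intro n
    refine ⟨n, fun x => ?_⟩
    simp only [hf]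
    split_ifs with h
    · exact h
    · simp
  have hfodd : ∀ n x, f n (-x) = - f n x := by
    intro n x
    simp only [hf, abs_neg]
    split_ifs <;> simp
  have hfle : ∀ n x, |f n x| ≤ |x| := by
    intro n x
    simp only [hf]
    split_ifs <;> simp [abs_nonneg]
  -- Step 1: conditional expectation of truncated increment is 0
  have hzero : ∀ n : ℕ, μ[fun ω => f n (D ω) | H] =ᵐ[μ] 0 := by
    intro n
    have h1 := hsymm s t (f n) (hfmeas n) (hfbdd n)
    have h2 : (fun ω => f n (X s ω - X t ω)) = -(fun ω => f n (D ω)) := by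
      funext ω
      simp only [Pi.neg_apply, hD]
      rw [show X s ω - X t ω = -(X t ω - X s ω) by ring, hfodd]
    rw [h2] at h1
    have h3 : μ[-(fun ω => f n (D ω))|H] =ᵐ[μ] -μ[fun ω => f n (D ω)|H] :=
      condExp_neg _ _
    have h4 := h1.trans h3
    filter_upwards [h4] with ω hω
    simp only [Pi.neg_apply] at hω
    simp only [Pi.zero_apply]
    linarith
  -- Step 2: ∫ fₙ(D) Z = 0 for bounded ℱ s measurable Z
  have hintmul : ∀ (n : ℕ) (Z : Ω → ℝ), StronglyMeasurable[ℱ s] Z →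
      ∀ C : ℝ, (∀ ω, |Z ω| ≤ C) → Integrable (fun ω => f n (D ω) * Z ω) μ := by
    intro n Z hZ C hC
    have hsm : AEStronglyMeasurable[m0] (fun ω => f n (D ω) * Z ω) μ :=
      (((hfmeas n).comp hDsm.measurable).stronglyMeasurable.mul
        (hZ.mono (ℱ.le s))).aestronglyMeasurable
    refine (integrable_const ((n : ℝ) * C)).mono' hsm ?_
    filter_upwards with ω
    rw [norm_mul, Real.norm_eq_abs, Real.norm_eq_abs]
    have h1 : |f n (D ω)| ≤ n := by
      simp only [hf]; split_ifs with h
      · exact h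
      · simp
    exact mul_le_mul h1 (hC ω) (abs_nonneg _) (by positivity)
  have hstep2 : ∀ (n : ℕ) (Z : Ω → ℝ), StronglyMeasurable[ℱ s] Z →
      ∀ C : ℝ, (∀ ω, |Z ω| ≤ C) → ∫ ω, f n (D ω) * Z ω ∂μ = 0 := by
    intro n Z hZ C hC
    have hint1 := hintmul n Z hZ C hC
    have h1 := hindep s t hst (f n) (hfmeas n) (hfbdd n) Z hZ ⟨C, hC⟩
    have h2 : μ[fun ω => f n (D ω) * Z ω | H] =ᵐ[μ] 0 := by
      filter_upwards [h1, hzero n] with ω hω h0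
      simp only [hD] at hω ⊢
      rw [hω, h0]
      simp
    have h3 : ∫ ω, (μ[fun ω => f n (D ω) * Z ω | H]) ω ∂μ = ∫ ω, f n (D ω) * Z ω ∂μ :=
      integral_condExp hHm0
    rw [← h3, integral_congr_ae h2]
    simp
  -- Step 3: ∫ D Z = 0 for bounded ℱ s measurable Z
  have hstep3 : ∀ (Z : Ω → ℝ), StronglyMeasurable[ℱ s] Z →
      ∀ C : ℝ, (∀ ω, |Z ω| ≤ C) → ∫ ω, D ω * Z ω ∂μ = 0 := by
    intro Z hZ C hC
    have hZm0 : StronglyMeasurable[m0] Z := hZ.mono (ℱ.le s)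
    have htend : Tendsto (fun n : ℕ => ∫ ω, f n (D ω) * Z ω ∂μ) atTop
        (nhds (∫ ω, D ω * Z ω ∂μ)) := by
      refine tendsto_integral_of_dominated_convergence (fun ω => |D ω| * C)
        (fun n => (hintmul n Z hZ C hC).aestronglyMeasurable) ?_ ?_ ?_
      · exact (hDint.abs.mul_const C)
      · intro n
        filter_upwards with ω
        rw [norm_mul]
        exact mul_le_mul (hfle n _) (hC ω) (abs_nonneg _)
          (abs_nonneg _)
      · filter_upwards with ω
        have : Tendsto (fun n : ℕ => f n (D ω)) atTop (nhds (D ω)) := by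
          refine tendsto_atTop_of_eventually_const (i₀ := ⌈|D ω|⌉₊) ?_
          intro n hn
          simp only [hf]
          rw [if_pos]
          exact le_trans (Nat.le_ceil _) (Nat.cast_le.mpr hn)
        exact this.mul_const _
    have : Tendsto (fun n : ℕ => (0 : ℝ)) atTop (nhds (∫ ω, D ω * Z ω ∂μ)) := by
      convert htend using 1
      funext n
      exact (hstep2 n Z hZ C hC).symm
    exact (tendsto_const_nhds_iff.mp this).symm
  -- Step 4: set integrals of D over ℱ s sets vanish
  have hstep4 : ∀ A : Set Ω, MeasurableSet[ℱ s] A → ∫ ω in A, D ω ∂μ = 0 := by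
    intro A hA
    have hZ : StronglyMeasurable[ℱ s] (A.indicator (fun _ => (1 : ℝ))) :=
      stronglyMeasurable_const.indicator hA
    have hbd : ∀ ω, |A.indicator (fun _ => (1 : ℝ)) ω| ≤ 1 := by
      intro ω
      by_cases h : ω ∈ A <;> simp [Set.indicator_apply, h]
    have h0 := hstep3 _ hZ 1 hbd
    have heq : (fun ω => D ω * A.indicator (fun _ => (1 : ℝ)) ω) = A.indicator D := by
      funext ω
      by_cases h : ω ∈ A <;> simp [Set.indicator_apply, h]
    rw [heq] at h0
    rwa [@integral_indicator Ω ℝ m0 _ _ D A μ (ℱ.le s A hA)] at h0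
  -- Conclude
  haveI : SigmaFinite (μ.trim (ℱ.le s)) := by
    infer_instance
  refine (ae_eq_condExp_of_forall_setIntegral_eq (ℱ.le s) (hint t) ?_ ?_ ?_).symm
  · intro A hA _
    exact (hint s).mono_measure Measure.restrict_le_self
  · intro A hA _
    have h0 := hstep4 A hA
    have : ∫ ω in A, X t ω ∂μ - ∫ ω in A, X s ω ∂μ = 0 := by
      rw [← integral_sub ((hint t).mono_measure Measure.restrict_le_self)
        ((hint s).mono_measure Measure.restrict_le_self)]
      exact h0
    linarith
  · exact (hadapted s).stronglyMeasurable.aestronglyMeasurable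
end

section
/- Let ξ₁, ξ₂ be independent, square-integrable, symmetric real random variables (ξ_i equal in law to −ξ_i). Then E[(ξ₁+ξ₂)² | σ(ξ₁², ξ₂²)] = ξ₁² + ξ₂² almost surely; consequently, for every convex function f: R → R such that both sides are integrable, E[f((ξ₁+ξ₂)²)] ≥ E[f(ξ₁² + ξ₂²)], i.e. (ξ₁+ξ₂)² dominates ξ₁²+ξ₂² in convex order. -/
open MeasureTheory ProbabilityTheory

/-- For independent, square-integrable, symmetric random variables `ξ₁, ξ₂`,
the conditional expectation of `(ξ₁ + ξ₂)²` given `σ(ξ₁², ξ₂²)` is `ξ₁² + ξ₂²`;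
consequently `(ξ₁ + ξ₂)²` dominates `ξ₁² + ξ₂²` in convex order. -/
theorem sq_sum_condexp_and_convex_order
    {Ω : Type*} {m0 : MeasurableSpace Ω} {μ : Measure Ω} [IsProbabilityMeasure μ]
    (ξ₁ ξ₂ : Ω → ℝ) (hm₁ : Measurable ξ₁) (hm₂ : Measurable ξ₂)
    (hindep : IndepFun ξ₁ ξ₂ μ)
    (hsq₁ : Integrable (fun ω => ξ₁ ω ^ 2) μ) (hsq₂ : Integrable (fun ω => ξ₂ ω ^ 2) μ)
    (hsymm₁ : Measure.map ξ₁ μ = Measure.map (fun ω => -ξ₁ ω) μ)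
    (hsymm₂ : Measure.map ξ₂ μ = Measure.map (fun ω => -ξ₂ ω) μ) :
    (μ[fun ω => (ξ₁ ω + ξ₂ ω) ^ 2 |
        MeasurableSpace.comap (fun ω => (ξ₁ ω ^ 2, ξ₂ ω ^ 2)) inferInstance]
      =ᵐ[μ] fun ω => ξ₁ ω ^ 2 + ξ₂ ω ^ 2) ∧
    ∀ f : ℝ → ℝ, ConvexOn ℝ Set.univ f →
      Integrable (fun ω => f ((ξ₁ ω + ξ₂ ω) ^ 2)) μ →
      Integrable (fun ω => f (ξ₁ ω ^ 2 + ξ₂ ω ^ 2)) μ →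
      ∫ ω, f (ξ₁ ω ^ 2 + ξ₂ ω ^ 2) ∂μ ≤ ∫ ω, f ((ξ₁ ω + ξ₂ ω) ^ 2) ∂μ := by
  -- joint law and its invariance under negation of the first coordinate
  set φ : Ω → ℝ × ℝ := fun ω => (ξ₁ ω, ξ₂ ω) with hφdef
  set φ' : Ω → ℝ × ℝ := fun ω => (-ξ₁ ω, ξ₂ ω) with hφ'def
  have hφm : Measurable φ := hm₁.prodMk hm₂
  have hφ'm : Measurable φ' := hm₁.neg.prodMk hm₂
  have hindep' : IndepFun (fun ω => -ξ₁ ω) ξ₂ μ := by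
    have := hindep.comp (measurable_neg : Measurable (Neg.neg : ℝ → ℝ)) measurable_id
    exact this
  have hmap : μ.map φ = μ.map φ' := by
    rw [hφdef, hφ'def,
      (indepFun_iff_map_prod_eq_prod_map_map hm₁.aemeasurable hm₂.aemeasurable).1 hindep,
      (indepFun_iff_map_prod_eq_prod_map_map (show Measurable (fun ω => -ξ₁ ω) from hm₁.neg).aemeasurable hm₂.aemeasurable).1 hindep',
      hsymm₁]
  -- integral transfer lemma
  have hTrans : ∀ g : ℝ × ℝ → ℝ, StronglyMeasurable g →
      ∫ ω, g (φ ω) ∂μ = ∫ ω, g (φ' ω) ∂μ := by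
    intro g hg
    rw [← integral_map hφm.aemeasurable hg.aestronglyMeasurable, hmap,
      integral_map hφ'm.aemeasurable hg.aestronglyMeasurable]
  -- integrabilities
  have hi₁ : Integrable ξ₁ μ :=
    ((memLp_two_iff_integrable_sq hm₁.aestronglyMeasurable).2 hsq₁).integrable one_le_two
  have hi₂ : Integrable ξ₂ μ :=
    ((memLp_two_iff_integrable_sq hm₂.aestronglyMeasurable).2 hsq₂).integrable one_le_two
  have hmul : Integrable (fun ω => ξ₁ ω * ξ₂ ω) μ := hindep.integrable_mul hi₁ hi₂
  have hsum_int : Integrable (fun ω => ξ₁ ω ^ 2 + ξ₂ ω ^ 2) μ := hsq₁.add hsq₂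
  have hmul2 : Integrable (fun ω => 2 * (ξ₁ ω * ξ₂ ω)) μ := hmul.const_mul 2
  have hsq_sum : Integrable (fun ω => (ξ₁ ω + ξ₂ ω) ^ 2) μ := by
    have heq : (fun ω => (ξ₁ ω + ξ₂ ω) ^ 2)
        = fun ω => (ξ₁ ω ^ 2 + ξ₂ ω ^ 2) + 2 * (ξ₁ ω * ξ₂ ω) := by
      funext ω; ring
    rw [heq]; exact hsum_int.add hmul2
  constructor
  · -- conditional expectation part
    set T : Ω → ℝ × ℝ := fun ω => (ξ₁ ω ^ 2, ξ₂ ω ^ 2) with hTdef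
    have hTm : Measurable T := (hm₁.pow_const 2).prodMk (hm₂.pow_const 2)
    have hle : MeasurableSpace.comap T inferInstance ≤ m0 := hTm.comap_le
    have hTG : Measurable[MeasurableSpace.comap T inferInstance] T :=
      Measurable.of_comap_le le_rfl
    have hGm : StronglyMeasurable[MeasurableSpace.comap T inferInstance]
        (fun ω => ξ₁ ω ^ 2 + ξ₂ ω ^ 2) := by
      have hmeas : Measurable[MeasurableSpace.comap T inferInstance]
          fun ω => (T ω).1 + (T ω).2 :=
        Measurable.add (Measurable.comp measurable_fst hTG)
          (Measurable.comp measurable_snd hTG)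
      exact Measurable.stronglyMeasurable hmeas
    -- E[2 ξ₁ ξ₂ | mG] = 0
    have hzero : (fun _ => (0 : ℝ))
        =ᵐ[μ] μ[fun ω => 2 * (ξ₁ ω * ξ₂ ω) | MeasurableSpace.comap T inferInstance] := by
      refine ae_eq_condExp_of_forall_setIntegral_eq hle hmul2
        (fun s _ _ => (integrable_const (0 : ℝ)).integrableOn)
        (fun s hs _ => ?_)
        (StronglyMeasurable.aestronglyMeasurable
          (@stronglyMeasurable_const _ _ (MeasurableSpace.comap T inferInstance) _ (0 : ℝ)))
      obtain ⟨B, hB, rfl⟩ := hs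
      rw [integral_const]
      simp only [smul_eq_mul, mul_zero]
      -- set S and g
      set S : Set (ℝ × ℝ) := (fun p : ℝ × ℝ => (p.1 ^ 2, p.2 ^ 2)) ⁻¹' B with hSdef
      have hS : MeasurableSet S :=
        ((measurable_fst.pow_const 2).prodMk (measurable_snd.pow_const 2)) hB
      set g : ℝ × ℝ → ℝ := S.indicator (fun p => 2 * (p.1 * p.2)) with hgdef
      have hgm : StronglyMeasurable g :=
        (((measurable_fst.mul measurable_snd).const_mul 2).indicator hS).stronglyMeasurable
      have hpre : T ⁻¹' B = φ ⁻¹' S := rfl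
      have hind : ∀ ω, S.indicator (fun p => 2 * (p.1 * p.2)) (φ ω)
          = (φ ⁻¹' S).indicator (fun ω => 2 * (ξ₁ ω * ξ₂ ω)) ω := by
        intro ω
        by_cases h : φ ω ∈ S <;> simp [Set.indicator, h, Set.mem_preimage, φ]
      have hodd : ∀ ω, g (φ' ω) = - g (φ ω) := by
        intro ω
        have hmem : φ' ω ∈ S ↔ φ ω ∈ S := by
          simp [hSdef, hφdef, hφ'def, Set.mem_preimage, neg_pow]
        by_cases h : φ ω ∈ S
        · rw [hgdef, Set.indicator_of_mem (hmem.2 h), Set.indicator_of_mem h]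
          show 2 * (-ξ₁ ω * ξ₂ ω) = -(2 * (ξ₁ ω * ξ₂ ω)); ring
        · rw [hgdef, Set.indicator_of_notMem (fun hh => h (hmem.1 hh)),
            Set.indicator_of_notMem h, neg_zero]
      have hint : ∫ ω, g (φ ω) ∂μ = 0 := by
        have h1 := hTrans g hgm
        have h2 : ∫ ω, g (φ' ω) ∂μ = - ∫ ω, g (φ ω) ∂μ := by
          rw [← integral_neg]
          exact integral_congr_ae (Filter.Eventually.of_forall hodd)
        rw [h2] at h1
        linarith
      have hSm0 : MeasurableSet (φ ⁻¹' S) := hφm hS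
      symm
      calc ∫ x in T ⁻¹' B, 2 * (ξ₁ x * ξ₂ x) ∂μ
          = ∫ ω, (φ ⁻¹' S).indicator (fun ω => 2 * (ξ₁ ω * ξ₂ ω)) ω ∂μ := by
            rw [hpre, integral_indicator hSm0]
        _ = ∫ ω, g (φ ω) ∂μ :=
            integral_congr_ae (Filter.Eventually.of_forall fun ω => (hind ω).symm)
        _ = 0 := hint
    -- assemble
    have hsplit : (fun ω => (ξ₁ ω + ξ₂ ω) ^ 2)
        = (fun ω => ξ₁ ω ^ 2 + ξ₂ ω ^ 2) + (fun ω => 2 * (ξ₁ ω * ξ₂ ω)) := by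
      funext ω
      show (ξ₁ ω + ξ₂ ω) ^ 2 = (ξ₁ ω ^ 2 + ξ₂ ω ^ 2) + 2 * (ξ₁ ω * ξ₂ ω)
      ring
    have h1 : μ[fun ω => ξ₁ ω ^ 2 + ξ₂ ω ^ 2 | MeasurableSpace.comap T inferInstance]
        = fun ω => ξ₁ ω ^ 2 + ξ₂ ω ^ 2 :=
      condExp_of_stronglyMeasurable hle hGm hsum_int
    have hadd : μ[fun ω => (ξ₁ ω + ξ₂ ω) ^ 2 | MeasurableSpace.comap T inferInstance]
        =ᵐ[μ] μ[fun ω => ξ₁ ω ^ 2 + ξ₂ ω ^ 2 | MeasurableSpace.comap T inferInstance]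
          + μ[fun ω => 2 * (ξ₁ ω * ξ₂ ω) | MeasurableSpace.comap T inferInstance] := by
      rw [hsplit]
      exact condExp_add hsum_int hmul2 _
    filter_upwards [hadd, hzero.symm] with ω hω₁ hω₂
    simp [hω₁, h1, hω₂]
  · -- convex order part
    intro f hf hint₁ hint₂
    have hfc : Continuous f := by
      have h := hf.continuousOn_interior
      rw [interior_univ] at h
      exact continuousOn_univ.mp h
    set h : ℝ × ℝ → ℝ := fun p => f ((p.1 + p.2) ^ 2) with hhdef
    have hhm : StronglyMeasurable h :=
      (hfc.comp ((continuous_fst.add continuous_snd).pow 2)).stronglyMeasurable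
    have hminus_eq : (fun ω => f ((ξ₁ ω - ξ₂ ω) ^ 2)) = fun ω => h (φ' ω) := by
      funext ω
      show f ((ξ₁ ω - ξ₂ ω) ^ 2) = f ((-ξ₁ ω + ξ₂ ω) ^ 2)
      congr 1; ring
    have e1 : ∫ ω, f ((ξ₁ ω - ξ₂ ω) ^ 2) ∂μ = ∫ ω, f ((ξ₁ ω + ξ₂ ω) ^ 2) ∂μ := by
      rw [hminus_eq, ← hTrans h hhm]
    have hint₃ : Integrable (fun ω => f ((ξ₁ ω - ξ₂ ω) ^ 2)) μ := by
      have ha : Integrable h (μ.map φ) :=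
        (integrable_map_measure hhm.aestronglyMeasurable hφm.aemeasurable).2 hint₁
      rw [hmap] at ha
      have hb : Integrable (fun ω => h (φ' ω)) μ :=
        (integrable_map_measure hhm.aestronglyMeasurable hφ'm.aemeasurable).1 ha
      rwa [hminus_eq]
    have hpt : ∀ ω, f (ξ₁ ω ^ 2 + ξ₂ ω ^ 2)
        ≤ (1 / 2) * f ((ξ₁ ω + ξ₂ ω) ^ 2) + (1 / 2) * f ((ξ₁ ω - ξ₂ ω) ^ 2) := by
      intro ω
      have hcv := hf.2 (Set.mem_univ ((ξ₁ ω + ξ₂ ω) ^ 2))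
        (Set.mem_univ ((ξ₁ ω - ξ₂ ω) ^ 2))
        (by norm_num : (0:ℝ) ≤ 1 / 2) (by norm_num : (0:ℝ) ≤ 1 / 2) (by norm_num)
      have harg : (1 / 2 : ℝ) • ((ξ₁ ω + ξ₂ ω) ^ 2) + (1 / 2 : ℝ) • ((ξ₁ ω - ξ₂ ω) ^ 2)
          = ξ₁ ω ^ 2 + ξ₂ ω ^ 2 := by
        simp only [smul_eq_mul]; ring
      rw [harg] at hcv
      simpa [smul_eq_mul] using hcv
    calc ∫ ω, f (ξ₁ ω ^ 2 + ξ₂ ω ^ 2) ∂μ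
        ≤ ∫ ω, ((1 / 2) * f ((ξ₁ ω + ξ₂ ω) ^ 2)
            + (1 / 2) * f ((ξ₁ ω - ξ₂ ω) ^ 2)) ∂μ :=
          integral_mono hint₂ ((hint₁.const_mul _).add (hint₃.const_mul _)) hpt
      _ = (1 / 2) * ∫ ω, f ((ξ₁ ω + ξ₂ ω) ^ 2) ∂μ
            + (1 / 2) * ∫ ω, f ((ξ₁ ω - ξ₂ ω) ^ 2) ∂μ := by
          rw [integral_add (hint₁.const_mul _) (hint₃.const_mul _),
            integral_const_mul, integral_const_mul]
      _ = ∫ ω, f ((ξ₁ ω + ξ₂ ω) ^ 2) ∂μ := by rw [e1]; ring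
end

section
/- Let ξ₁, …, ξ_n be independent, square-integrable, symmetric real random variables and let S_k = ξ₁ + … + ξ_k denote partial sums. Then for every convex function f with the relevant expectations finite, E[f((S_n)²)] ≥ E[f(Σ_{k=1}^n ξ_k²)]. More generally, for any coarsening of the index set into consecutive blocks B₁,…,B_m, E[f(Σ_{j=1}^m (Σ_{k∈B_j} ξ_k)²)] ≥ E[f(Σ_{k=1}^n ξ_k²)] — i.e. realized variance over a coarser partition dominates realized variance over a finer partition in convex order. -/
open MeasureTheory ProbabilityTheory Finset

noncomputable def rvSgn (s : Finset ℕ) (k : ℕ) : ℝ := if k ∈ s then -1 else 1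

lemma rvSgn_mul_self (s : Finset ℕ) (k : ℕ) : rvSgn s k * rvSgn s k = 1 := by
  unfold rvSgn; split_ifs <;> norm_num

lemma rvSgn_key (A : Finset ℕ) (k l : ℕ) (hk : k ∈ A) :
    ∑ s ∈ A.powerset, rvSgn s k * rvSgn s l
      = if k = l then (2 : ℝ) ^ A.card else 0 := by
  rcases eq_or_ne k l with rfl | hne
  · simp only [if_pos rfl]
    rw [Finset.sum_congr rfl (fun s _ => rvSgn_mul_self s k), Finset.sum_const,
      Finset.card_powerset]
    simp
  · rw [if_neg hne]
    have hA : A = insert k (A.erase k) := (Finset.insert_erase hk).symm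
    rw [hA, Finset.sum_powerset_insert (Finset.notMem_erase k A)]
    have h1 : ∀ t ∈ (A.erase k).powerset, rvSgn t k * rvSgn t l
        + rvSgn (insert k t) k * rvSgn (insert k t) l = 0 := by
      intro t ht
      have hkt : k ∉ t := fun h => Finset.notMem_erase k A (Finset.mem_powerset.1 ht h)
      have e1 : rvSgn t k = 1 := if_neg hkt
      have e2 : rvSgn (insert k t) k = -1 := if_pos (Finset.mem_insert_self k t)
      have e3 : rvSgn (insert k t) l = rvSgn t l := by
        simp [rvSgn, Finset.mem_insert, Ne.symm hne]
      rw [e1, e2, e3]; ring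
    rw [← Finset.sum_add_distrib, Finset.sum_congr rfl h1, Finset.sum_const_zero]

lemma sum_blocks (c : ℕ → ℕ) (hmono : Monotone c) (g : ℕ → ℝ) (m : ℕ) :
    ∑ j ∈ range m, ∑ k ∈ Ico (c j) (c (j + 1)), g k = ∑ k ∈ Ico (c 0) (c m), g k := by
  induction m with
  | zero => simp
  | succ M ih =>
    rw [Finset.sum_range_succ, ih,
      Finset.sum_Ico_consecutive _ (hmono (Nat.zero_le M)) (hmono (Nat.le_succ M))]

lemma avg_identity (n m : ℕ) (c : ℕ → ℕ) (hmono : Monotone c) (h0 : c 0 = 0) (hcm : c m = n)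
    (x : ℕ → ℝ) :
    ∑ s ∈ (range n).powerset, ∑ j ∈ range m,
        (∑ k ∈ Ico (c j) (c (j + 1)), rvSgn s k * x k) ^ 2
      = 2 ^ n * ∑ k ∈ range n, x k ^ 2 := by
  have hsub : ∀ j ∈ range m, ∀ k ∈ Ico (c j) (c (j + 1)), k ∈ range n := by
    intro j hj k hk
    rw [Finset.mem_range]
    have : c (j + 1) ≤ n := hcm ▸ hmono (Finset.mem_range.1 hj)
    exact lt_of_lt_of_le (Finset.mem_Ico.1 hk).2 this
  rw [Finset.sum_comm]
  have step1 : ∀ j ∈ range m,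
      ∑ s ∈ (range n).powerset, (∑ k ∈ Ico (c j) (c (j + 1)), rvSgn s k * x k) ^ 2
        = ∑ k ∈ Ico (c j) (c (j + 1)), x k * x k * 2 ^ n := by
    intro j hj
    have expand : ∀ s : Finset ℕ, (∑ k ∈ Ico (c j) (c (j + 1)), rvSgn s k * x k) ^ 2
        = ∑ k ∈ Ico (c j) (c (j + 1)), ∑ l ∈ Ico (c j) (c (j + 1)),
            x k * x l * (rvSgn s k * rvSgn s l) := by
      intro s
      rw [sq, Finset.sum_mul_sum]
      exact Finset.sum_congr rfl fun k _ => Finset.sum_congr rfl fun l _ => by ring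
    rw [Finset.sum_congr rfl fun s _ => expand s, Finset.sum_comm]
    refine Finset.sum_congr rfl fun k hk => ?_
    rw [Finset.sum_comm]
    have inner : ∀ l ∈ Ico (c j) (c (j + 1)),
        ∑ s ∈ (range n).powerset, x k * x l * (rvSgn s k * rvSgn s l)
          = if l = k then x k * x k * 2 ^ n else 0 := by
      intro l hl
      rw [← Finset.mul_sum, rvSgn_key (range n) k l (hsub j hj k hk), Finset.card_range]
      rcases eq_or_ne k l with rfl | hne
      · simp
      · rw [if_neg hne, if_neg (Ne.symm hne), mul_zero]
    rw [Finset.sum_congr rfl inner, Finset.sum_ite_eq' _ k, if_pos hk]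
  rw [Finset.sum_congr rfl step1]
  have : ∀ k, x k * x k * 2 ^ n = 2 ^ n * x k ^ 2 := fun k => by ring
  simp_rw [this]
  simp_rw [← Finset.mul_sum]
  rw [sum_blocks c hmono _ m, h0, hcm, ← Finset.range_eq_Ico]

lemma joint_map {Ω : Type*} {m0 : MeasurableSpace Ω} {μ : Measure Ω} [IsProbabilityMeasure μ]
    (n : ℕ) (ξ : ℕ → Ω → ℝ) (hm : ∀ k, Measurable (ξ k))
    (hindep : iIndepFun ξ μ) :
    μ.map (fun ω (i : Fin n) => ξ i ω) = Measure.pi (fun i : Fin n => μ.map (ξ i)) := by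
  haveI : ∀ i : Fin n, IsProbabilityMeasure (μ.map (ξ i)) :=
    fun i => Measure.isProbabilityMeasure_map (hm i).aemeasurable
  refine (Measure.pi_eq fun s hs => ?_).symm
  rw [Measure.map_apply (measurable_pi_lambda (fun ω (i : Fin n) => ξ i ω) fun i => hm i)
    (MeasurableSet.univ_pi hs)]
  set S' : ℕ → Set ℝ := fun k => if h : k < n then s ⟨k, h⟩ else Set.univ with hS'
  have hmeasS : ∀ k, MeasurableSet (S' k) := by
    intro k
    by_cases h : k < n
    · simpa only [hS', dif_pos h] using hs ⟨k, h⟩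
    · simpa only [hS', dif_neg h] using MeasurableSet.univ
  have hpre : (fun ω (i : Fin n) => ξ i ω) ⁻¹' (Set.univ.pi s)
      = ⋂ k ∈ Finset.range n, ξ k ⁻¹' S' k := by
    ext ω
    simp only [Set.mem_preimage, Set.mem_pi, Set.mem_univ, forall_true_left,
      Set.mem_iInter, Finset.mem_range]
    constructor
    · intro h k hk
      simp only [hS', dif_pos hk]
      exact h ⟨k, hk⟩
    · intro h i
      have := h i i.isLt
      simpa only [hS', dif_pos i.isLt] using this
  rw [hpre, hindep.meas_biInter (fun k _ => ⟨S' k, hmeasS k, rfl⟩)]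
  rw [← Fin.prod_univ_eq_prod_range (fun k => μ (ξ k ⁻¹' S' k)) n]
  refine Finset.prod_congr rfl fun i _ => ?_
  rw [Measure.map_apply (hm i) (hs i)]
  congr 1
  simp only [hS', dif_pos i.isLt]

/-- For independent, square-integrable, symmetric random variables, the realized variance
over a coarser partition (into consecutive blocks) dominates the realized variance over the
finest partition in convex order; in particular the square of the full sum dominates the sum
of squares. -/
theorem coarse_rv_convex_order_dominates_fine_rv
    {Ω : Type*} {m0 : MeasurableSpace Ω} {μ : Measure Ω} [IsProbabilityMeasure μ]
    (n : ℕ) (ξ : ℕ → Ω → ℝ) (hm : ∀ k, Measurable (ξ k))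
    (hindep : iIndepFun ξ μ)
    (hsq : ∀ k, Integrable (fun ω => ξ k ω ^ 2) μ)
    (hsymm : ∀ k, Measure.map (ξ k) μ = Measure.map (fun ω => -ξ k ω) μ) :
    -- special case: the squared total sum dominates the sum of squares
    (∀ f : ℝ → ℝ, ConvexOn ℝ Set.univ f →
      Integrable (fun ω => f ((∑ k ∈ range n, ξ k ω) ^ 2)) μ →
      Integrable (fun ω => f (∑ k ∈ range n, ξ k ω ^ 2)) μ →
      ∫ ω, f (∑ k ∈ range n, ξ k ω ^ 2) ∂μ
        ≤ ∫ ω, f ((∑ k ∈ range n, ξ k ω) ^ 2) ∂μ) ∧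
    -- general case: any coarsening into consecutive blocks
    (∀ (m : ℕ) (c : ℕ → ℕ), Monotone c → c 0 = 0 → c m = n →
      ∀ f : ℝ → ℝ, ConvexOn ℝ Set.univ f →
        Integrable (fun ω => f (∑ j ∈ range m, (∑ k ∈ Ico (c j) (c (j + 1)), ξ k ω) ^ 2)) μ →
        Integrable (fun ω => f (∑ k ∈ range n, ξ k ω ^ 2)) μ →
        ∫ ω, f (∑ k ∈ range n, ξ k ω ^ 2) ∂μ
          ≤ ∫ ω, f (∑ j ∈ range m, (∑ k ∈ Ico (c j) (c (j + 1)), ξ k ω) ^ 2) ∂μ) := by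
  have key : ∀ (m : ℕ) (c : ℕ → ℕ), Monotone c → c 0 = 0 → c m = n →
      ∀ f : ℝ → ℝ, ConvexOn ℝ Set.univ f →
        Integrable (fun ω => f (∑ j ∈ range m, (∑ k ∈ Ico (c j) (c (j + 1)), ξ k ω) ^ 2)) μ →
        Integrable (fun ω => f (∑ k ∈ range n, ξ k ω ^ 2)) μ →
        ∫ ω, f (∑ k ∈ range n, ξ k ω ^ 2) ∂μ
          ≤ ∫ ω, f (∑ j ∈ range m, (∑ k ∈ Ico (c j) (c (j + 1)), ξ k ω) ^ 2) ∂μ := by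
    intro m c hmono h0 hcm f hconv hint_c hint_f
    have hfc : Continuous f := continuousOn_univ.mp (hconv.continuousOn isOpen_univ)
    set B : (Fin n → ℝ) → ℝ := fun y => ∑ j ∈ range m,
      (∑ k ∈ Ico (c j) (c (j + 1)), if h : k < n then y ⟨k, h⟩ else 0) ^ 2 with hBdef
    have hBc : Continuous B := by
      refine continuous_finset_sum _ fun j _ => Continuous.pow ?_ 2
      refine continuous_finset_sum _ fun k _ => ?_
      by_cases h : k < n
      · simpa only [dif_pos h] using continuous_apply (⟨k, h⟩ : Fin n)
      · simpa only [dif_neg h] using (continuous_const : Continuous fun _ : Fin n → ℝ => (0:ℝ))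
    have hG : Measurable (f ∘ B) := (hfc.comp hBc).measurable
    have hBeval : ∀ x : ℕ → ℝ, B (fun i : Fin n => x i)
        = ∑ j ∈ range m, (∑ k ∈ Ico (c j) (c (j + 1)), x k) ^ 2 := by
      intro x
      refine Finset.sum_congr rfl fun j hj => ?_
      congr 1
      refine Finset.sum_congr rfl fun k hk => ?_
      have hkn : k < n := by
        have : c (j + 1) ≤ n := hcm ▸ hmono (Finset.mem_range.1 hj)
        exact lt_of_lt_of_le (Finset.mem_Ico.1 hk).2 this
      simp only [dif_pos hkn]
    -- the joint law is invariant under sign flips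
    have hmap : ∀ s : Finset ℕ,
        μ.map (fun ω (i : Fin n) => rvSgn s i * ξ i ω)
          = μ.map (fun ω (i : Fin n) => ξ i ω) := by
      intro s
      have hm' : ∀ k, Measurable (fun ω => rvSgn s k * ξ k ω) :=
        fun k => (hm k).const_mul _
      have hindep' : iIndepFun (fun k ω => rvSgn s k * ξ k ω) μ :=
        hindep.comp (fun k x => rvSgn s k * x) (fun k => measurable_const_mul _)
      rw [joint_map n _ hm' hindep', joint_map n ξ hm hindep]
      refine congrArg Measure.pi (funext fun i => ?_)
      show μ.map (fun ω => rvSgn (s : Finset ℕ) (i : ℕ) * ξ i ω) = μ.map (ξ i)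
      unfold rvSgn
      split_ifs with h
      · have : (fun ω => (-1 : ℝ) * ξ (i : ℕ) ω) = fun ω => -ξ (i : ℕ) ω := by
          funext ω; ring
        rw [this]
        exact (hsymm i).symm
      · simp
    have hXmeas : Measurable (fun ω (i : Fin n) => ξ i ω) :=
      measurable_pi_lambda _ fun i => hm i
    have hXsmeas : ∀ s : Finset ℕ, Measurable (fun ω (i : Fin n) => rvSgn s i * ξ i ω) :=
      fun s => measurable_pi_lambda _ fun i => (hm i).const_mul _
    -- rewrite the coarse integrand via B
    have hcoarse : ∀ ω, f (∑ j ∈ range m, (∑ k ∈ Ico (c j) (c (j + 1)), ξ k ω) ^ 2)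
        = (f ∘ B) (fun i : Fin n => ξ i ω) := fun ω =>
      (congrArg f (hBeval (fun k => ξ k ω))).symm
    have hQs : ∀ (s : Finset ℕ) (ω),
        f (∑ j ∈ range m, (∑ k ∈ Ico (c j) (c (j + 1)), rvSgn s k * ξ k ω) ^ 2)
          = (f ∘ B) (fun i : Fin n => rvSgn s i * ξ i ω) := fun s ω =>
      (congrArg f (hBeval (fun k => rvSgn s k * ξ k ω))).symm
    -- integrability and integral identity for each sign flip
    have hint_G : Integrable (f ∘ B) (μ.map (fun ω (i : Fin n) => ξ i ω)) := by
      rw [integrable_map_measure hG.aestronglyMeasurable hXmeas.aemeasurable]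
      exact hint_c.congr (Filter.Eventually.of_forall fun ω => hcoarse ω)
    have hint_s : ∀ s : Finset ℕ, Integrable (fun ω =>
        f (∑ j ∈ range m, (∑ k ∈ Ico (c j) (c (j + 1)), rvSgn s k * ξ k ω) ^ 2)) μ := by
      intro s
      have : Integrable (f ∘ B) (μ.map (fun ω (i : Fin n) => rvSgn s i * ξ i ω)) := by
        rw [hmap s]; exact hint_G
      rw [integrable_map_measure hG.aestronglyMeasurable (hXsmeas s).aemeasurable] at this
      exact this.congr (Filter.Eventually.of_forall fun ω => (hQs s ω).symm)
    have heq_s : ∀ s : Finset ℕ,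
        ∫ ω, f (∑ j ∈ range m, (∑ k ∈ Ico (c j) (c (j + 1)), rvSgn s k * ξ k ω) ^ 2) ∂μ
          = ∫ ω, f (∑ j ∈ range m, (∑ k ∈ Ico (c j) (c (j + 1)), ξ k ω) ^ 2) ∂μ := by
      intro s
      simp_rw [hcoarse, hQs s]
      rw [← integral_map (hXsmeas s).aemeasurable hG.aestronglyMeasurable,
        ← integral_map hXmeas.aemeasurable hG.aestronglyMeasurable, hmap s]
    -- pointwise Jensen
    have h2n : ((2 : ℝ) ^ n) ≠ 0 := by positivity
    have hcard : ((range n).powerset.card : ℝ) = 2 ^ n := by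
      rw [Finset.card_powerset, Finset.card_range]; push_cast; ring
    have jensen : ∀ ω, f (∑ k ∈ range n, ξ k ω ^ 2)
        ≤ ∑ s ∈ (range n).powerset, ((2 : ℝ) ^ n)⁻¹ *
            f (∑ j ∈ range m, (∑ k ∈ Ico (c j) (c (j + 1)), rvSgn s k * ξ k ω) ^ 2) := by
      intro ω
      have hrep : ∑ k ∈ range n, ξ k ω ^ 2
          = ∑ s ∈ (range n).powerset, ((2 : ℝ) ^ n)⁻¹ •
              (∑ j ∈ range m, (∑ k ∈ Ico (c j) (c (j + 1)), rvSgn s k * ξ k ω) ^ 2) := by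
        simp_rw [smul_eq_mul]
        rw [← Finset.mul_sum, avg_identity n m c hmono h0 hcm (fun k => ξ k ω),
          inv_mul_cancel_left₀ h2n]
      calc f (∑ k ∈ range n, ξ k ω ^ 2)
          ≤ ∑ s ∈ (range n).powerset, ((2 : ℝ) ^ n)⁻¹ •
              f (∑ j ∈ range m, (∑ k ∈ Ico (c j) (c (j + 1)), rvSgn s k * ξ k ω) ^ 2) := by
            rw [hrep]
            exact hconv.map_sum_le (fun s _ => by positivity)
              (by rw [Finset.sum_const, nsmul_eq_mul, hcard, mul_inv_cancel₀ h2n])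
              (fun s _ => Set.mem_univ _)
        _ = _ := by simp_rw [smul_eq_mul]
    -- integrate
    have hsum_int : Integrable (fun ω => ∑ s ∈ (range n).powerset, ((2 : ℝ) ^ n)⁻¹ *
        f (∑ j ∈ range m, (∑ k ∈ Ico (c j) (c (j + 1)), rvSgn s k * ξ k ω) ^ 2)) μ :=
      integrable_finset_sum _ fun s _ => (hint_s s).const_mul _
    calc ∫ ω, f (∑ k ∈ range n, ξ k ω ^ 2) ∂μ
        ≤ ∫ ω, ∑ s ∈ (range n).powerset, ((2 : ℝ) ^ n)⁻¹ *
            f (∑ j ∈ range m, (∑ k ∈ Ico (c j) (c (j + 1)), rvSgn s k * ξ k ω) ^ 2) ∂μ :=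
          integral_mono hint_f hsum_int jensen
      _ = ∑ s ∈ (range n).powerset, ((2 : ℝ) ^ n)⁻¹ *
            ∫ ω, f (∑ j ∈ range m, (∑ k ∈ Ico (c j) (c (j + 1)), rvSgn s k * ξ k ω) ^ 2) ∂μ := by
          rw [integral_finset_sum _ fun s _ => (hint_s s).const_mul _]
          exact Finset.sum_congr rfl fun s _ => integral_const_mul _ _
      _ = ∑ s ∈ (range n).powerset, ((2 : ℝ) ^ n)⁻¹ *
            ∫ ω, f (∑ j ∈ range m, (∑ k ∈ Ico (c j) (c (j + 1)), ξ k ω) ^ 2) ∂μ := by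
          exact Finset.sum_congr rfl fun s _ => by rw [heq_s s]
      _ = ∫ ω, f (∑ j ∈ range m, (∑ k ∈ Ico (c j) (c (j + 1)), ξ k ω) ^ 2) ∂μ := by
          rw [Finset.sum_const, nsmul_eq_mul, hcard, ← mul_assoc,
            mul_inv_cancel₀ h2n, one_mul]
  refine ⟨?_, key⟩
  intro f hconv h1 h2
  set c : ℕ → ℕ := fun j => if j = 0 then 0 else n with hc
  have hmono : Monotone c := by
    intro a b hab
    simp only [hc]
    split_ifs with ha hb
    · exact le_rfl
    · exact Nat.zero_le n
    · omega
    · exact le_rfl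
  have := key 1 c hmono (by simp [hc]) (by simp [hc]) f hconv ?_ h2
  · simpa [hc, Finset.sum_range_one, Nat.Ico_zero_eq_range] using this
  · simpa [hc, Finset.sum_range_one, Nat.Ico_zero_eq_range] using h1
end

section
/- Let ξ₁, …, ξ_n be independent, square-integrable, symmetric real random variables, and let b₁, …, b_n be real constants. Then for every increasing convex function f with finite expectations, E[f(Σ_{k=1}^n (ξ_k + b_k)²)] ≥ E[f(Σ_{k=1}^n ξ_k²)]. (This is the discrete analogue of the increasing convex order between realized variance of a drift-perturbed process and the quadratic variation of its martingale part.) -/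
open MeasureTheory ProbabilityTheory Finset

lemma joint_map_eq_pi_aux {Ω : Type*} {m0 : MeasurableSpace Ω} {μ : Measure Ω}
    [IsProbabilityMeasure μ] (n : ℕ) (η : ℕ → Ω → ℝ) (hm : ∀ k, Measurable (η k))
    (hindep : iIndepFun η μ) :
    Measure.map (fun ω (i : Fin n) => η i ω) μ
      = Measure.pi (fun i : Fin n => Measure.map (η (i : ℕ)) μ) := by
  classical
  haveI : ∀ i : Fin n, IsProbabilityMeasure (Measure.map (η (i : ℕ)) μ) :=
    fun i => Measure.isProbabilityMeasure_map (hm _).aemeasurable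
  have hT : Measurable (fun ω (i : Fin n) => η i ω) :=
    measurable_pi_lambda _ fun i => hm _
  refine (Measure.pi_eq fun s hs => ?_).symm
  rw [Measure.map_apply hT (MeasurableSet.univ_pi hs)]
  set sets : ℕ → Set ℝ := fun k => if h : k < n then s ⟨k, h⟩ else Set.univ with hsets
  have hpre : (fun ω (i : Fin n) => η i ω) ⁻¹' (Set.pi Set.univ s)
      = ⋂ k ∈ Finset.range n, η k ⁻¹' sets k := by
    ext ω
    simp only [Set.mem_preimage, Set.mem_pi, Set.mem_univ, forall_true_left,
      Set.mem_iInter, Finset.mem_range]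
    constructor
    · intro h k hk
      simp only [hsets, dif_pos hk, Set.mem_preimage]
      exact h ⟨k, hk⟩
    · intro h i
      have := h i i.isLt
      simpa [hsets, dif_pos i.isLt] using this
  rw [hpre, hindep.measure_inter_preimage_eq_mul (Finset.range n)
    (fun k _ => by
      simp only [hsets]
      split_ifs with h
      · exact hs ⟨k, h⟩
      · exact MeasurableSet.univ)]
  rw [← Fin.prod_univ_eq_prod_range (fun k => μ (η k ⁻¹' sets k)) n]
  refine Finset.prod_congr rfl fun i _ => ?_
  rw [Measure.map_apply (hm _) (hs i)]
  congr 1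
  simp [hsets, i.isLt]

/-- For independent, square-integrable, symmetric random variables `ξ_k` and deterministic
drifts `b_k`, the drift-perturbed realized variance `Σ (ξ_k + b_k)²` dominates `Σ ξ_k²`
in increasing convex order. -/
theorem drifted_rv_icx_dominates_rv
    {Ω : Type*} {m0 : MeasurableSpace Ω} {μ : Measure Ω} [IsProbabilityMeasure μ]
    (n : ℕ) (ξ : ℕ → Ω → ℝ) (b : ℕ → ℝ) (hm : ∀ k, Measurable (ξ k))
    (hindep : iIndepFun ξ μ)
    (hsq : ∀ k, Integrable (fun ω => ξ k ω ^ 2) μ)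
    (hsymm : ∀ k, Measure.map (ξ k) μ = Measure.map (fun ω => -ξ k ω) μ) :
    ∀ f : ℝ → ℝ, ConvexOn ℝ Set.univ f → Monotone f →
      Integrable (fun ω => f (∑ k ∈ range n, (ξ k ω + b k) ^ 2)) μ →
      Integrable (fun ω => f (∑ k ∈ range n, ξ k ω ^ 2)) μ →
      ∫ ω, f (∑ k ∈ range n, ξ k ω ^ 2) ∂μ
        ≤ ∫ ω, f (∑ k ∈ range n, (ξ k ω + b k) ^ 2) ∂μ := by
  intro f hconv hmono hint_plus hint_base
  have hf : Measurable f := hmono.measurable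
  have hmneg : ∀ k, Measurable (fun ω => -ξ k ω) := fun k => (hm k).neg
  have hindep' : iIndepFun (fun k ω => -ξ k ω) μ :=
    hindep.comp (fun _ => Neg.neg) (fun _ => measurable_neg)
  set T : Ω → (Fin n → ℝ) := fun ω (i : Fin n) => ξ i ω with hTdef
  set T' : Ω → (Fin n → ℝ) := fun ω (i : Fin n) => -ξ i ω with hT'def
  have hT : Measurable T := measurable_pi_lambda _ fun i => hm _
  have hT' : Measurable T' := measurable_pi_lambda _ fun i => (hm _).neg
  have hlaw : Measure.map T μ = Measure.map T' μ := by
    rw [hTdef, hT'def, joint_map_eq_pi_aux n ξ hm hindep,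
      joint_map_eq_pi_aux n (fun k ω => -ξ k ω) hmneg hindep']
    congr 1
    funext i
    exact hsymm i
  -- the two test functions on Fin n → ℝ
  set gp : (Fin n → ℝ) → ℝ := fun x => f (∑ i : Fin n, (x i + b i) ^ 2) with hgpdef
  set gm : (Fin n → ℝ) → ℝ := fun x => f (∑ i : Fin n, (x i - b i) ^ 2) with hgmdef
  have hgp : Measurable gp :=
    hf.comp (Finset.measurable_sum _ fun i _ =>
      ((measurable_pi_apply i).add_const _).pow_const 2)
  have hgm : Measurable gm :=
    hf.comp (Finset.measurable_sum _ fun i _ =>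
      ((measurable_pi_apply i).sub_const _).pow_const 2)
  -- composed functions
  have hcomp_p : ∀ ω, gp (T ω) = f (∑ k ∈ range n, (ξ k ω + b k) ^ 2) := by
    intro ω
    simp only [hgpdef, hTdef]
    rw [Fin.sum_univ_eq_sum_range (fun k => (ξ k ω + b k) ^ 2) n]
  have hcomp_m : ∀ ω, gm (T ω) = f (∑ k ∈ range n, (ξ k ω - b k) ^ 2) := by
    intro ω
    simp only [hgmdef, hTdef]
    rw [Fin.sum_univ_eq_sum_range (fun k => (ξ k ω - b k) ^ 2) n]
  have hcomp_m' : ∀ ω, gm (T' ω) = f (∑ k ∈ range n, (ξ k ω + b k) ^ 2) := by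
    intro ω
    simp only [hgmdef, hT'def]
    rw [Fin.sum_univ_eq_sum_range (fun k => (-ξ k ω - b k) ^ 2) n]
    congr 1
    exact Finset.sum_congr rfl fun k _ => by ring
  -- integrability of the minus version
  have hint_m'_comp : Integrable (fun ω => gm (T' ω)) μ := by
    have : (fun ω => gm (T' ω)) = fun ω => f (∑ k ∈ range n, (ξ k ω + b k) ^ 2) :=
      funext hcomp_m'
    rw [this]; exact hint_plus
  have hint_gm_map' : Integrable gm (Measure.map T' μ) :=
    (integrable_map_measure hgm.aestronglyMeasurable hT'.aemeasurable).mpr hint_m'_comp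
  have hint_gm_map : Integrable gm (Measure.map T μ) := by rw [hlaw]; exact hint_gm_map'
  have hint_minus : Integrable (fun ω => f (∑ k ∈ range n, (ξ k ω - b k) ^ 2)) μ := by
    have h := (integrable_map_measure hgm.aestronglyMeasurable hT.aemeasurable).mp hint_gm_map
    exact (integrable_congr (Filter.Eventually.of_forall fun ω => hcomp_m ω)).mp h
  -- equality of the two integrals
  have hint_eq : ∫ ω, f (∑ k ∈ range n, (ξ k ω - b k) ^ 2) ∂μ
      = ∫ ω, f (∑ k ∈ range n, (ξ k ω + b k) ^ 2) ∂μ := by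
    calc ∫ ω, f (∑ k ∈ range n, (ξ k ω - b k) ^ 2) ∂μ
        = ∫ ω, gm (T ω) ∂μ := by simp only [hcomp_m]
      _ = ∫ x, gm x ∂(Measure.map T μ) :=
          (integral_map hT.aemeasurable hgm.aestronglyMeasurable).symm
      _ = ∫ x, gm x ∂(Measure.map T' μ) := by rw [hlaw]
      _ = ∫ ω, gm (T' ω) ∂μ := integral_map hT'.aemeasurable hgm.aestronglyMeasurable
      _ = ∫ ω, f (∑ k ∈ range n, (ξ k ω + b k) ^ 2) ∂μ := by simp only [hcomp_m']
  -- pointwise inequality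
  have hpt : ∀ ω, f (∑ k ∈ range n, ξ k ω ^ 2)
      ≤ (1/2 : ℝ) * f (∑ k ∈ range n, (ξ k ω + b k) ^ 2)
        + (1/2 : ℝ) * f (∑ k ∈ range n, (ξ k ω - b k) ^ 2) := by
    intro ω
    set A := ∑ k ∈ range n, (ξ k ω + b k) ^ 2
    set B := ∑ k ∈ range n, (ξ k ω - b k) ^ 2
    have hmid : (1/2 : ℝ) * A + (1/2 : ℝ) * B
        = ∑ k ∈ range n, ξ k ω ^ 2 + ∑ k ∈ range n, b k ^ 2 := by
      simp only [A, B]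
      rw [Finset.mul_sum, Finset.mul_sum, ← Finset.sum_add_distrib, ← Finset.sum_add_distrib]
      exact Finset.sum_congr rfl fun k _ => by ring
    have h1 : f (∑ k ∈ range n, ξ k ω ^ 2) ≤ f ((1/2 : ℝ) * A + (1/2 : ℝ) * B) := by
      apply hmono
      rw [hmid]
      have : (0 : ℝ) ≤ ∑ k ∈ range n, b k ^ 2 :=
        Finset.sum_nonneg fun k _ => sq_nonneg _
      linarith
    have h2 : f ((1/2 : ℝ) * A + (1/2 : ℝ) * B) ≤ (1/2 : ℝ) * f A + (1/2 : ℝ) * f B := by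
      have := hconv.2 (Set.mem_univ A) (Set.mem_univ B)
        (by norm_num : (0:ℝ) ≤ 1/2) (by norm_num : (0:ℝ) ≤ 1/2) (by norm_num)
      simpa [smul_eq_mul] using this
    linarith
  -- integrate
  have hmainint : Integrable (fun ω =>
      (1/2 : ℝ) * f (∑ k ∈ range n, (ξ k ω + b k) ^ 2)
        + (1/2 : ℝ) * f (∑ k ∈ range n, (ξ k ω - b k) ^ 2)) μ :=
    (hint_plus.const_mul _).add (hint_minus.const_mul _)
  have hle : ∫ ω, f (∑ k ∈ range n, ξ k ω ^ 2) ∂μ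
      ≤ ∫ ω, ((1/2 : ℝ) * f (∑ k ∈ range n, (ξ k ω + b k) ^ 2)
        + (1/2 : ℝ) * f (∑ k ∈ range n, (ξ k ω - b k) ^ 2)) ∂μ :=
    integral_mono hint_base hmainint hpt
  rw [integral_add (hint_plus.const_mul _) (hint_minus.const_mul _),
    integral_const_mul, integral_const_mul, hint_eq] at hle
  linarith
end

section
/- Let Y and Z be integrable random variables with E[Y] = E[Z] and suppose E[f(Y)] ≥ E[f(Z)] for all increasing convex functions f for which both expectations are finite. Then E[f(Y)] ≥ E[f(Z)] for all convex functions f for which both expectations are finite; i.e. increasing convex order together with equal means implies convex order. -/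
open MeasureTheory

/-- Every convex function on `ℝ` has a subgradient at every point; moreover the subgradient
slope can be chosen as the supremum of left slopes. -/
lemma exists_subgradient_aux {f : ℝ → ℝ} (hf : ConvexOn ℝ Set.univ f) (a : ℝ) :
    ∃ s : ℝ, (∀ x, f a + s * (x - a) ≤ f x) ∧
      ∀ z : ℝ, (∀ x, x < a → (f a - f x) / (a - x) ≤ z) → s ≤ z := by
  set S : Set ℝ := (fun x => (f a - f x) / (a - x)) '' Set.Iio a with hS
  have hne : S.Nonempty := ⟨_, ⟨a - 1, by simp, rfl⟩⟩
  have hslope : ∀ x b, x < a → a < b →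
      (f a - f x) / (a - x) ≤ (f b - f a) / (b - a) := fun x b hx hb =>
    hf.slope_mono_adjacent (Set.mem_univ x) (Set.mem_univ b) hx hb
  have hbdd : BddAbove S := by
    refine ⟨(f (a + 1) - f a) / (a + 1 - a), ?_⟩
    rintro _ ⟨x, hx, rfl⟩
    exact hslope x (a + 1) hx (by linarith)
  refine ⟨sSup S, ?_, fun z hz => csSup_le hne (by rintro _ ⟨x, hx, rfl⟩; exact hz x hx)⟩
  intro x
  rcases lt_trichotomy x a with hx | hx | hx
  · have h1 : (f a - f x) / (a - x) ≤ sSup S := le_csSup hbdd ⟨x, hx, rfl⟩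
    have h2 : f a - f x ≤ sSup S * (a - x) := (div_le_iff₀ (by linarith)).1 h1
    nlinarith
  · subst hx; simp
  · have h1 : sSup S ≤ (f x - f a) / (x - a) :=
      csSup_le hne (by rintro _ ⟨y, hy, rfl⟩; exact hslope y x hy hx)
    have h2 : sSup S * (x - a) ≤ f x - f a := (le_div_iff₀ (by linarith)).1 h1
    linarith

/-- A convex function whose value at `c` is a global minimum is monotone on `[c, ∞)`. -/
lemma monotoneOn_of_min_aux {d : ℝ → ℝ} (hd : ConvexOn ℝ Set.univ d) {c : ℝ}
    (h0 : ∀ x, d c ≤ d x) : MonotoneOn d (Set.Ici c) := by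
  intro x hx y hy hxy
  rcases eq_or_lt_of_le hxy with rfl | hxy
  · exact le_rfl
  rcases eq_or_lt_of_le (Set.mem_Ici.mp hx : c ≤ x) with rfl | hcx
  · exact h0 y
  · have hsl := hd.slope_mono_adjacent (Set.mem_univ c) (Set.mem_univ y) hcx hxy
    have h1 : 0 ≤ (d x - d c) / (x - c) := div_nonneg (by linarith [h0 x]) (by linarith)
    have h2 : 0 ≤ (d y - d x) / (y - x) := le_trans h1 hsl
    rcases div_nonneg_iff.1 h2 with ⟨h3, _⟩ | ⟨_, h3⟩ <;> linarith

/-- Composing a convex function monotone on `[c, ∞)` with `max · c` preserves convexity. -/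
lemma convexOn_comp_max_aux {d : ℝ → ℝ} (hd : ConvexOn ℝ Set.univ d) {c : ℝ}
    (hmono : MonotoneOn d (Set.Ici c)) :
    ConvexOn ℝ Set.univ (fun x => d (max x c)) := by
  refine ⟨convex_univ, ?_⟩
  intro x _ y _ p q hp hq hpq
  simp only [smul_eq_mul]
  have hc : p * c + q * c = c := by linear_combination c * hpq
  have h1 : max (p * x + q * y) c ≤ p * max x c + q * max y c := by
    refine max_le ?_ ?_
    · have a1 := mul_le_mul_of_nonneg_left (le_max_left x c) hp
      have a2 := mul_le_mul_of_nonneg_left (le_max_left y c) hq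
      linarith
    · have a1 := mul_le_mul_of_nonneg_left (le_max_right x c) hp
      have a2 := mul_le_mul_of_nonneg_left (le_max_right y c) hq
      linarith
  have hm1 : c ∈ Set.Ici c := Set.mem_Ici.2 le_rfl
  have hmem1 : max (p * x + q * y) c ∈ Set.Ici c := Set.mem_Ici.2 (le_max_right _ _)
  have hmem2 : p * max x c + q * max y c ∈ Set.Ici c := by
    refine Set.mem_Ici.2 ?_
    have a1 := mul_le_mul_of_nonneg_left (le_max_right x c) hp
    have a2 := mul_le_mul_of_nonneg_left (le_max_right y c) hq
    linarith
  calc d (max (p * x + q * y) c) ≤ d (p * max x c + q * max y c) := hmono hmem1 hmem2 h1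
    _ ≤ p * d (max x c) + q * d (max y c) := by
        simpa using hd.2 (Set.mem_univ (max x c)) (Set.mem_univ (max y c)) hp hq hpq

/-- Increasing convex order together with equal means implies convex order
(Shaked–Shanthikumar, Thm. 4.A.35). -/
theorem icx_order_and_eq_mean_implies_cx_order
    {Ω₁ Ω₂ : Type*} {m₁ : MeasurableSpace Ω₁} {m₂ : MeasurableSpace Ω₂}
    {μ : Measure Ω₁} {ν : Measure Ω₂}
    [IsProbabilityMeasure μ] [IsProbabilityMeasure ν]
    (Y : Ω₁ → ℝ) (Z : Ω₂ → ℝ) (hY : Integrable Y μ) (hZ : Integrable Z ν)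
    (hmean : ∫ ω, Y ω ∂μ = ∫ ω, Z ω ∂ν)
    (hicx : ∀ f : ℝ → ℝ, ConvexOn ℝ Set.univ f → Monotone f →
      Integrable (fun ω => f (Y ω)) μ → Integrable (fun ω => f (Z ω)) ν →
      ∫ ω, f (Z ω) ∂ν ≤ ∫ ω, f (Y ω) ∂μ) :
    ∀ f : ℝ → ℝ, ConvexOn ℝ Set.univ f →
      Integrable (fun ω => f (Y ω)) μ → Integrable (fun ω => f (Z ω)) ν →
      ∫ ω, f (Z ω) ∂ν ≤ ∫ ω, f (Y ω) ∂μ := by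
  intro f hf hfY hfZ
  have hYm := hY.aemeasurable
  have hZm := hZ.aemeasurable
  obtain ⟨s₀, hs₀, -⟩ := exists_subgradient_aux hf 0
  set h : ℝ → ℝ := fun x => f x - (f 0 + s₀ * x) with h_def
  have hh : ConvexOn ℝ Set.univ h := by
    refine ⟨convex_univ, ?_⟩
    intro x _ y _ p q hp hq hpq
    have := hf.2 (Set.mem_univ x) (Set.mem_univ y) hp hq hpq
    simp only [smul_eq_mul, h_def] at this ⊢
    have e : f 0 + s₀ * (p * x + q * y) = p * (f 0 + s₀ * x) + q * (f 0 + s₀ * y) := by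
      linear_combination (-(f 0)) * hpq
    linarith
  have hh0 : ∀ x, 0 ≤ h x := fun x => by
    have := hs₀ x; simp only [h_def]; linarith
  have hh_zero : h 0 = 0 := by simp [h_def]
  have hhY : Integrable (fun ω => h (Y ω)) μ := by
    simpa [h_def, Pi.sub_def, Pi.add_def] using hfY.sub ((integrable_const (f 0)).add (hY.const_mul s₀))
  have hhZ : Integrable (fun ω => h (Z ω)) ν := by
    simpa [h_def, Pi.sub_def, Pi.add_def] using hfZ.sub ((integrable_const (f 0)).add (hZ.const_mul s₀))
  -- choose subgradients of `h` at each `-n`, with nonpositive slope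
  have hch : ∀ n : ℕ, ∃ t : ℝ,
      (∀ x, h (-(n : ℝ)) + t * (x - (-(n : ℝ))) ≤ h x) ∧ t ≤ 0 := by
    intro n
    obtain ⟨t, ht1, ht2⟩ := exists_subgradient_aux hh (-(n : ℝ))
    refine ⟨t, ht1, ht2 0 ?_⟩
    intro x hx
    have hn0 : -(n : ℝ) ≤ 0 := neg_nonpos.2 (Nat.cast_nonneg n)
    have hkey : h (-(n : ℝ)) ≤ h x := by
      rcases eq_or_lt_of_le hn0 with heq | hlt
      · rw [heq, hh_zero]; exact hh0 x
      · have hsl := hh.slope_mono_adjacent (Set.mem_univ x) (Set.mem_univ 0) hx hlt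
        rw [hh_zero] at hsl
        have h1 : (0 - h (-(n : ℝ))) / (0 - -(n : ℝ)) ≤ 0 :=
          div_nonpos_of_nonpos_of_nonneg (by linarith [hh0 (-(n : ℝ))]) (by linarith)
        have h2 : (h (-(n : ℝ)) - h x) / (-(n : ℝ) - x) ≤ 0 := le_trans hsl h1
        have h3 := (div_le_iff₀ (by linarith : (0:ℝ) < -(n : ℝ) - x)).1 h2
        linarith
    have : h (-(n : ℝ)) - h x ≤ 0 := by linarith
    exact div_nonpos_of_nonpos_of_nonneg this (by linarith)
  choose t ht htn using hch
  set c : ℕ → ℝ := fun n => -(n : ℝ) with c_def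
  set d : ℕ → ℝ → ℝ := fun n x => h x - (h (c n) + t n * (x - c n)) with d_def
  set G : ℕ → ℝ → ℝ := fun n x => d n (max x (c n)) with G_def
  have hd0 : ∀ n x, 0 ≤ d n x := fun n x => by
    have := ht n x
    simp only [d_def, c_def]
    linarith
  have hdc : ∀ n, d n (c n) = 0 := fun n => by simp [d_def]
  have hd_conv : ∀ n, ConvexOn ℝ Set.univ (d n) := by
    intro n
    refine ⟨convex_univ, ?_⟩
    intro x _ y _ p q hp hq hpq
    have := hh.2 (Set.mem_univ x) (Set.mem_univ y) hp hq hpq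
    simp only [smul_eq_mul, d_def] at this ⊢
    have e : h (c n) + t n * (p * x + q * y - c n)
        = p * (h (c n) + t n * (x - c n)) + q * (h (c n) + t n * (y - c n)) := by
      linear_combination (-(h (c n) - t n * (c n))) * hpq
    linarith
  have hd_mono : ∀ n, MonotoneOn (d n) (Set.Ici (c n)) := fun n =>
    monotoneOn_of_min_aux (hd_conv n) (fun x => by rw [hdc n]; exact hd0 n x)
  have hG_conv : ∀ n, ConvexOn ℝ Set.univ (G n) := fun n =>
    convexOn_comp_max_aux (hd_conv n) (hd_mono n)
  have hG_mono : ∀ n, Monotone (G n) := fun n x y hxy =>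
    hd_mono n (Set.mem_Ici.2 (le_max_right _ _)) (Set.mem_Ici.2 (le_max_right _ _))
      (max_le_max hxy le_rfl)
  have hG_meas : ∀ n, Measurable (G n) := fun n => (hG_mono n).measurable
  have hG_nonneg : ∀ n x, 0 ≤ G n x := fun n x => hd0 n _
  have hG_le : ∀ n x, G n x ≤ d n x := by
    intro n x
    rcases le_total (c n) x with hcx | hcx
    · rw [G_def]; simp only; rw [max_eq_left hcx]
    · rw [G_def]; simp only; rw [max_eq_right hcx, hdc n]; exact hd0 n x
  -- integrability of the pieces
  have hdY : ∀ n, Integrable (fun ω => d n (Y ω)) μ := by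
    intro n
    have : Integrable (fun ω => h (c n) + t n * (Y ω - c n)) μ :=
      (integrable_const _).add ((hY.sub (integrable_const _)).const_mul (t n))
    simpa [d_def, Pi.sub_def] using hhY.sub this
  have hdZ : ∀ n, Integrable (fun ω => d n (Z ω)) ν := by
    intro n
    have : Integrable (fun ω => h (c n) + t n * (Z ω - c n)) ν :=
      (integrable_const _).add ((hZ.sub (integrable_const _)).const_mul (t n))
    simpa [d_def, Pi.sub_def] using hhZ.sub this
  have hGY : ∀ n, Integrable (fun ω => G n (Y ω)) μ := by
    intro n
    refine (hdY n).mono' ((hG_meas n).comp_aemeasurable hYm).aestronglyMeasurable ?_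
    exact ae_of_all _ fun ω => by
      rw [Real.norm_eq_abs, abs_of_nonneg (hG_nonneg n _)]; exact hG_le n _
  have hGZ : ∀ n, Integrable (fun ω => G n (Z ω)) ν := by
    intro n
    refine (hdZ n).mono' ((hG_meas n).comp_aemeasurable hZm).aestronglyMeasurable ?_
    exact ae_of_all _ fun ω => by
      rw [Real.norm_eq_abs, abs_of_nonneg (hG_nonneg n _)]; exact hG_le n _
  have hGicx : ∀ n, ∫ ω, G n (Z ω) ∂ν ≤ ∫ ω, G n (Y ω) ∂μ := fun n =>
    hicx (G n) (hG_conv n) (hG_mono n) (hGY n) (hGZ n)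
  -- the truncated functions
  set hn : ℕ → ℝ → ℝ := fun n x => G n x + (h (c n) + t n * (x - c n)) with hn_def
  have hn_eq_ge : ∀ n x, c n ≤ x → hn n x = h x := by
    intro n x hx
    simp only [hn_def, G_def, d_def, max_eq_left hx]
    ring
  have hn_eq_lt : ∀ n x, x ≤ c n → hn n x = h (c n) + t n * (x - c n) := by
    intro n x hx
    simp only [hn_def, G_def, d_def, max_eq_right hx]
    ring
  have hn_nonneg : ∀ n x, 0 ≤ hn n x := by
    intro n x
    rcases le_total (c n) x with hcx | hcx
    · rw [hn_eq_ge n x hcx]; exact hh0 x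
    · rw [hn_eq_lt n x hcx]
      have : 0 ≤ t n * (x - c n) := by nlinarith [htn n]
      linarith [hh0 (c n)]
  have hn_le : ∀ n x, hn n x ≤ h x := by
    intro n x
    rcases le_total (c n) x with hcx | hcx
    · rw [hn_eq_ge n x hcx]
    · rw [hn_eq_lt n x hcx]; exact ht n x
  -- integral identities for the affine part
  have hLY : ∀ n, ∫ ω, (h (c n) + t n * (Y ω - c n)) ∂μ
      = h (c n) + t n * ((∫ ω, Y ω ∂μ) - c n) := by
    intro n
    have e1 : Integrable (fun ω => Y ω - c n) μ := hY.sub (integrable_const _)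
    rw [integral_add (integrable_const _) (e1.const_mul (t n)), integral_const,
      integral_const_mul, integral_sub hY (integrable_const _), integral_const]
    simp
  have hLZ : ∀ n, ∫ ω, (h (c n) + t n * (Z ω - c n)) ∂ν
      = h (c n) + t n * ((∫ ω, Z ω ∂ν) - c n) := by
    intro n
    have e1 : Integrable (fun ω => Z ω - c n) ν := hZ.sub (integrable_const _)
    rw [integral_add (integrable_const _) (e1.const_mul (t n)), integral_const,
      integral_const_mul, integral_sub hZ (integrable_const _), integral_const]
    simp
  -- key inequality for each truncation
  have key : ∀ n, ∫ ω, hn n (Z ω) ∂ν ≤ ∫ ω, hn n (Y ω) ∂μ := by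
    intro n
    have hiZ : ∫ ω, hn n (Z ω) ∂ν
        = (∫ ω, G n (Z ω) ∂ν) + (h (c n) + t n * ((∫ ω, Z ω ∂ν) - c n)) := by
      have e1 : Integrable (fun ω => Z ω - c n) ν := hZ.sub (integrable_const _)
      have e2 : Integrable (fun ω => h (c n) + t n * (Z ω - c n)) ν :=
        (integrable_const _).add (e1.const_mul (t n))
      rw [show (fun ω => hn n (Z ω)) = fun ω => G n (Z ω) + (h (c n) + t n * (Z ω - c n)) from
        rfl, integral_add (hGZ n) e2, hLZ n]
    have hiY : ∫ ω, hn n (Y ω) ∂μ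
        = (∫ ω, G n (Y ω) ∂μ) + (h (c n) + t n * ((∫ ω, Y ω ∂μ) - c n)) := by
      have e1 : Integrable (fun ω => Y ω - c n) μ := hY.sub (integrable_const _)
      have e2 : Integrable (fun ω => h (c n) + t n * (Y ω - c n)) μ :=
        (integrable_const _).add (e1.const_mul (t n))
      rw [show (fun ω => hn n (Y ω)) = fun ω => G n (Y ω) + (h (c n) + t n * (Y ω - c n)) from
        rfl, integral_add (hGY n) e2, hLY n]
    rw [hiZ, hiY, hmean]
    linarith [hGicx n]
  -- pass to the limit by dominated convergence
  have hmeasZ : ∀ n, AEStronglyMeasurable (fun ω => hn n (Z ω)) ν := fun n =>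
    (((hG_meas n).comp_aemeasurable hZm).add
      (aemeasurable_const.add ((hZm.sub aemeasurable_const).const_mul (t n)))).aestronglyMeasurable
  have hmeasY : ∀ n, AEStronglyMeasurable (fun ω => hn n (Y ω)) μ := fun n =>
    (((hG_meas n).comp_aemeasurable hYm).add
      (aemeasurable_const.add ((hYm.sub aemeasurable_const).const_mul (t n)))).aestronglyMeasurable
  have hboundZ : ∀ n, ∀ᵐ ω ∂ν, ‖hn n (Z ω)‖ ≤ h (Z ω) := fun n =>
    ae_of_all _ fun ω => by
      rw [Real.norm_eq_abs, abs_of_nonneg (hn_nonneg n _)]; exact hn_le n _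
  have hboundY : ∀ n, ∀ᵐ ω ∂μ, ‖hn n (Y ω)‖ ≤ h (Y ω) := fun n =>
    ae_of_all _ fun ω => by
      rw [Real.norm_eq_abs, abs_of_nonneg (hn_nonneg n _)]; exact hn_le n _
  have hptw : ∀ x : ℝ, Filter.Tendsto (fun n => hn n x) Filter.atTop (nhds (h x)) := by
    intro x
    have hev : ∀ᶠ n in Filter.atTop, hn n x = h x := by
      rw [Filter.eventually_atTop]
      refine ⟨⌈-x⌉₊, fun n hn' => ?_⟩
      apply hn_eq_ge
      have h1 : -x ≤ (⌈-x⌉₊ : ℝ) := Nat.le_ceil _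
      have h2 : ((⌈-x⌉₊ : ℕ) : ℝ) ≤ (n : ℝ) := Nat.cast_le.2 hn'
      simp only [c_def]
      linarith
    exact Filter.Tendsto.congr' (hev.mono fun n e => e.symm) tendsto_const_nhds
  have hlimZ : Filter.Tendsto (fun n : ℕ => ∫ ω, hn n (Z ω) ∂ν) Filter.atTop
      (nhds (∫ ω, h (Z ω) ∂ν)) := by
    exact tendsto_integral_of_dominated_convergence _ hmeasZ hhZ hboundZ
      (ae_of_all _ fun ω => hptw (Z ω))
  have hlimY : Filter.Tendsto (fun n : ℕ => ∫ ω, hn n (Y ω) ∂μ) Filter.atTop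
      (nhds (∫ ω, h (Y ω) ∂μ)) := by
    exact tendsto_integral_of_dominated_convergence _ hmeasY hhY hboundY
      (ae_of_all _ fun ω => hptw (Y ω))
  have hfinal : ∫ ω, h (Z ω) ∂ν ≤ ∫ ω, h (Y ω) ∂μ :=
    le_of_tendsto_of_tendsto' hlimZ hlimY key
  -- unfold `h`
  have hiZ : ∫ ω, f (Z ω) ∂ν = (∫ ω, h (Z ω) ∂ν) + (f 0 + s₀ * ∫ ω, Z ω ∂ν) := by
    have : (fun ω => f (Z ω)) = fun ω => h (Z ω) + (f 0 + s₀ * Z ω) := by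
      funext ω; simp [h_def]
    have e2 : Integrable (fun ω => f 0 + s₀ * Z ω) ν := (integrable_const _).add (hZ.const_mul s₀)
    rw [this, integral_add hhZ e2, integral_add (integrable_const _) (hZ.const_mul s₀),
      integral_const, integral_const_mul]
    simp
  have hiY : ∫ ω, f (Y ω) ∂μ = (∫ ω, h (Y ω) ∂μ) + (f 0 + s₀ * ∫ ω, Y ω ∂μ) := by
    have : (fun ω => f (Y ω)) = fun ω => h (Y ω) + (f 0 + s₀ * Y ω) := by
      funext ω; simp [h_def]
    have e2 : Integrable (fun ω => f 0 + s₀ * Y ω) μ := (integrable_const _).add (hY.const_mul s₀)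
    rw [this, integral_add hhY e2, integral_add (integrable_const _) (hY.const_mul s₀),
      integral_const, integral_const_mul]
    simp
  rw [hiZ, hiY, hmean]
  linarith
end

section
/- Let ξ₁, …, ξ_n be independent, square-integrable, symmetric real random variables. For each m ≤ n let R_m = Σ over the m consecutive blocks of a fixed nested refinement sequence of (block sum)², i.e. R_m is the realized variance over the m-th partition in a nested sequence of partitions of {1,…,n} (with R_n = Σ_k ξ_k²). Then (R_m)_{m = n, n−1, …} is a reverse martingale with respect to G_m = σ(R_m, R_{m+1}, …, R_n): E[R_{m−1} | G_m] = R_m a.s. for each m. -/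
open MeasureTheory ProbabilityTheory Finset

namespace NestedRVAux

/-- Extend a vector `x : Fin n → ℝ` to `ℕ` by zero. -/
noncomputable def ext (n : ℕ) (x : Fin n → ℝ) (k : ℕ) : ℝ :=
  if h : k < n then x ⟨k, h⟩ else 0

/-- Sum of coordinates over `[u, v)`. -/
noncomputable def ssum (n u v : ℕ) (x : Fin n → ℝ) : ℝ := ∑ k ∈ Finset.Ico u v, ext n x k

/-- Flip the signs of coordinates in `[t, t')`. -/
noncomputable def sflip (n t t' : ℕ) (x : Fin n → ℝ) : Fin n → ℝ :=
  fun k => if t ≤ (k : ℕ) ∧ (k : ℕ) < t' then -x k else x k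

lemma measurable_ext (n k : ℕ) : Measurable (fun x => ext n x k) := by
  unfold ext
  split
  · exact measurable_pi_apply _
  · exact measurable_const

lemma measurable_ssum (n u v : ℕ) : Measurable (ssum n u v) :=
  Finset.measurable_sum _ fun k _ => measurable_ext n k

lemma measurable_sflip (n t t' : ℕ) : Measurable (sflip n t t') := by
  refine measurable_pi_iff.2 fun k => ?_
  unfold sflip
  split
  · exact (measurable_pi_apply k).neg
  · exact measurable_pi_apply k

lemma ext_sflip_mem {n t t' k : ℕ} (x : Fin n → ℝ) (h1 : t ≤ k) (h2 : k < t') :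
    ext n (sflip n t t' x) k = -ext n x k := by
  rcases Nat.lt_or_ge k n with hkn | hkn
  · have e1 : ext n (sflip n t t' x) k = sflip n t t' x ⟨k, hkn⟩ := dif_pos hkn
    have e2 : ext n x k = x ⟨k, hkn⟩ := dif_pos hkn
    have e3 : sflip n t t' x ⟨k, hkn⟩ =
        if t ≤ k ∧ k < t' then -x ⟨k, hkn⟩ else x ⟨k, hkn⟩ := rfl
    rw [e1, e2, e3, if_pos ⟨h1, h2⟩]
  · have e1 : ext n (sflip n t t' x) k = 0 := dif_neg (not_lt.2 hkn)
    have e2 : ext n x k = 0 := dif_neg (not_lt.2 hkn)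
    rw [e1, e2, neg_zero]

lemma ext_sflip_not {n t t' k : ℕ} (x : Fin n → ℝ) (h : ¬(t ≤ k ∧ k < t')) :
    ext n (sflip n t t' x) k = ext n x k := by
  rcases Nat.lt_or_ge k n with hkn | hkn
  · have e1 : ext n (sflip n t t' x) k = sflip n t t' x ⟨k, hkn⟩ := dif_pos hkn
    have e2 : ext n x k = x ⟨k, hkn⟩ := dif_pos hkn
    have e3 : sflip n t t' x ⟨k, hkn⟩ =
        if t ≤ k ∧ k < t' then -x ⟨k, hkn⟩ else x ⟨k, hkn⟩ := rfl
    rw [e1, e2, e3, if_neg h]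
  · have e1 : ext n (sflip n t t' x) k = 0 := dif_neg (not_lt.2 hkn)
    have e2 : ext n x k = 0 := dif_neg (not_lt.2 hkn)
    rw [e1, e2]

lemma ssum_sflip_neg {n t t' u v : ℕ} (x : Fin n → ℝ) (h1 : t ≤ u) (h2 : v ≤ t') :
    ssum n u v (sflip n t t' x) = -ssum n u v x := by
  unfold ssum
  rw [← Finset.sum_neg_distrib]
  refine Finset.sum_congr rfl fun k hk => ?_
  rw [Finset.mem_Ico] at hk
  exact ext_sflip_mem x (h1.trans hk.1) (hk.2.trans_le h2)

lemma ssum_sflip_eq {n t t' u v : ℕ} (x : Fin n → ℝ)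
    (h : ∀ k, u ≤ k → k < v → ¬(t ≤ k ∧ k < t')) :
    ssum n u v (sflip n t t' x) = ssum n u v x := by
  refine Finset.sum_congr rfl fun k hk => ?_
  rw [Finset.mem_Ico] at hk
  exact ext_sflip_not x (h k hk.1 hk.2)

lemma ennreal_one_div_one_eq : (1 : ENNReal) / 1 = 1 / 2 + 1 / 2 := by
  rw [div_one, one_div]
  exact ENNReal.inv_two_add_inv_two.symm

/-- The σ-algebra of measurable sets invariant under `F`. -/
def invariants {X : Type*} [MeasurableSpace X] (F : X → X) : MeasurableSpace X where
  MeasurableSet' t := MeasurableSet t ∧ F ⁻¹' t = t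
  measurableSet_empty := ⟨MeasurableSet.empty, rfl⟩
  measurableSet_compl t ht := ⟨ht.1.compl, by rw [Set.preimage_compl, ht.2]⟩
  measurableSet_iUnion f hf := ⟨MeasurableSet.iUnion fun i => (hf i).1, by
    rw [Set.preimage_iUnion]
    exact Set.iUnion_congr fun i => (hf i).2⟩

end NestedRVAux

open NestedRVAux

/-- Discrete reverse martingale of nested realized variances (Lévy / Cogburn–Tucker):
for independent, square-integrable, symmetric `ξ₁,…,ξ_n` and a nested sequence of
partitions of `{1,…,n}` into consecutive blocks (the `m`-th partition having division
points `p m 0 = 0 ≤ p m 1 ≤ … ≤ p m m = n`, each finer partition containing the division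
points of the coarser one, the finest being the full partition), the realized variances
`R m ω = Σ_j (Σ_{k ∈ [p m j, p m (j+1))} ξ k ω)²` form a reverse martingale:
`E[R_{m-1} | σ(R_m, …, R_n)] = R_m`. -/
theorem nested_rv_reverse_martingale
    {Ω : Type*} {m0 : MeasurableSpace Ω} {μ : Measure Ω} [IsProbabilityMeasure μ]
    (n : ℕ) (ξ : ℕ → Ω → ℝ) (hm : ∀ k, Measurable (ξ k))
    (hindep : iIndepFun ξ μ)
    (hsq : ∀ k, Integrable (fun ω => ξ k ω ^ 2) μ)
    (hsymm : ∀ k, Measure.map (ξ k) μ = Measure.map (fun ω => -ξ k ω) μ)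
    (p : ℕ → ℕ → ℕ)
    (hp0 : ∀ m, p m 0 = 0) (hpm : ∀ m, p m m = n)
    (hmono : ∀ m, Monotone (p m))
    (hnested : ∀ m j, j ≤ m → ∃ j', j' ≤ m + 1 ∧ p (m + 1) j' = p m j)
    (hfinest : ∀ k, k ≤ n → p n k = k)
    (R : ℕ → Ω → ℝ)
    (hR : ∀ m ω, R m ω = ∑ j ∈ range m, (∑ k ∈ Ico (p m j) (p m (j + 1)), ξ k ω) ^ 2)
    (G : ℕ → MeasurableSpace Ω)
    (hG : ∀ m, G m = ⨆ (l : ℕ) (_ : m ≤ l ∧ l ≤ n),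
      MeasurableSpace.comap (R l) inferInstance) :
    ∀ m, 2 ≤ m → m ≤ n → μ[R (m - 1) | G m] =ᵐ[μ] R m := by
  classical
  intro m hm2 hmn
  -- basic facts about the partition points
  have hple : ∀ l j, j ≤ l → p l j ≤ n := fun l j hj => (hpm l) ▸ hmono l hj
  have hdiv : ∀ l, m ≤ l → ∀ j, j ≤ m → ∃ j', j' ≤ l ∧ p l j' = p m j := by
    intro l hl
    induction l, hl using Nat.le_induction with
    | base => exact fun j hj => ⟨j, hj, rfl⟩
    | succ l hl ih =>
      intro j hj
      obtain ⟨j', hj', hj'e⟩ := ih j hj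
      obtain ⟨j'', hj'', hj''e⟩ := hnested l j' hj'
      exact ⟨j'', hj'', hj''e.trans hj'e⟩
  -- the canonical map to the product space
  set Φ : Ω → (Fin n → ℝ) := fun ω k => ξ k ω with hΦdef
  have hΦ : Measurable Φ := measurable_pi_iff.2 fun k => hm k
  set νf : Fin n → Measure ℝ := fun k => Measure.map (ξ k) μ with hνf
  have hprob : ∀ k : Fin n, IsProbabilityMeasure (νf k) := fun k =>
    Measure.isProbabilityMeasure_map (hm k).aemeasurable
  haveI : ∀ k : Fin n, SigmaFinite (νf k) := fun k => by
    haveI := hprob k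
    infer_instance
  -- the law of Φ is the product of the marginals
  have hmap : Measure.map Φ μ = Measure.pi νf := by
    refine (Measure.pi_eq (μ := νf) (fun s hs => ?_)).symm
    rw [Measure.map_apply hΦ (MeasurableSet.univ_pi hs)]
    set sets : ℕ → Set ℝ := fun k => if h : k < n then s ⟨k, h⟩ else Set.univ with hsets
    have hpre : Φ ⁻¹' Set.univ.pi s = ⋂ k ∈ Finset.range n, ξ k ⁻¹' sets k := by
      ext ω
      simp only [Set.mem_preimage, Set.mem_univ_pi, Set.mem_iInter, Finset.mem_range]
      constructor
      · intro h k hk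
        simp only [hsets, dif_pos hk]
        exact h ⟨k, hk⟩
      · intro h i
        have := h i.val i.isLt
        simpa only [hsets, dif_pos i.isLt] using this
    rw [hpre, hindep.measure_inter_preimage_eq_mul (Finset.range n)
      (fun k _ => by
        simp only [hsets]
        split
        · exact hs _
        · exact MeasurableSet.univ)]
    rw [← Fin.prod_univ_eq_prod_range (fun k => μ (ξ k ⁻¹' sets k)) n]
    refine Finset.prod_congr rfl fun i _ => ?_
    simp only [hsets, dif_pos i.isLt]
    rw [hνf, Measure.map_apply (hm i) (hs i)]
  -- the sequence-space version of the realized variances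
  set r : ℕ → (Fin n → ℝ) → ℝ :=
    fun l x => ∑ j ∈ range l, (ssum n (p l j) (p l (j + 1)) x) ^ 2 with hrdef
  have hrmeas : ∀ l, Measurable (r l) :=
    fun l => Finset.measurable_sum _ fun j _ => (measurable_ssum n _ _).pow_const 2
  have hssumΦ : ∀ u v, v ≤ n → ∀ ω, ssum n u v (Φ ω) = ∑ k ∈ Ico u v, ξ k ω := by
    intro u v hv ω
    refine Finset.sum_congr rfl fun k hk => ?_
    rw [Finset.mem_Ico] at hk
    have hkn : k < n := lt_of_lt_of_le hk.2 hv
    simp only [NestedRVAux.ext, dif_pos hkn]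
    rfl
  have hRr : ∀ l ω, R l ω = r l (Φ ω) := by
    intro l ω
    rw [hR]
    refine Finset.sum_congr rfl fun j hj => ?_
    rw [Finset.mem_range] at hj
    rw [hssumΦ _ _ (hple l (j + 1) hj) ω]
  have hRmeas : ∀ l, Measurable (R l) := by
    intro l
    have : R l = fun ω => r l (Φ ω) := funext fun ω => hRr l ω
    rw [this]
    exact (hrmeas l).comp hΦ
  have hGle : G m ≤ m0 := by
    rw [hG]
    exact iSup₂_le fun l _ => measurable_iff_comap_le.1 (hRmeas l)
  haveI : SigmaFinite (μ.trim hGle) := inferInstance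
  -- integrability
  have hL2 : ∀ k, MemLp (ξ k) 2 μ := fun k =>
    (memLp_two_iff_integrable_sq (hm k).aestronglyMeasurable).2 (hsq k)
  have hSL2 : ∀ u v : ℕ, MemLp (fun ω => ∑ k ∈ Ico u v, ξ k ω) 2 μ := fun u v =>
    memLp_finsetSum _ fun k _ => hL2 k
  have hmul : ∀ f g : Ω → ℝ, MemLp f 2 μ → MemLp g 2 μ →
      Integrable (fun ω => f ω * g ω) μ := by
    intro f g hf hg
    have h1 : MemLp (f • g) 1 μ :=
      hg.smul hf
    have h2 : (f • g) = fun ω => f ω * g ω := rfl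
    have h3 := h1.integrable le_rfl
    rwa [h2] at h3
  have hint_sq : ∀ u v : ℕ, Integrable (fun ω => (∑ k ∈ Ico u v, ξ k ω) ^ 2) μ := by
    intro u v
    have := hmul _ _ (hSL2 u v) (hSL2 u v)
    simpa [pow_two] using this
  have hRint : ∀ l, Integrable (R l) μ := by
    intro l
    have : R l = fun ω => ∑ j ∈ range l, (∑ k ∈ Ico (p l j) (p l (j + 1)), ξ k ω) ^ 2 :=
      funext fun ω => hR l ω
    rw [this]
    exact integrable_finset_sum _ fun j _ => hint_sq _ _
  -- R m is G m-measurable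
  have hRmG : StronglyMeasurable[G m] (R m) := by
    have hle : MeasurableSpace.comap (R m) inferInstance ≤ G m := by
      rw [hG]
      exact le_iSup₂ (f := fun (l : ℕ) (_ : m ≤ l ∧ l ≤ n) =>
        MeasurableSpace.comap (R l) inferInstance) m ⟨le_rfl, hmn⟩
    exact (measurable_iff_comap_le.2 hle).stronglyMeasurable
  -- the partially refined realized variances, interpolating between r (m-1) and r m
  set V : ℕ → (Fin n → ℝ) → ℝ := fun i x =>
    (∑ i' ∈ range i, (ssum n (p m i') (p m (i' + 1)) x) ^ 2) +
      ∑ j ∈ range (m - 1), (ssum n (max (p (m - 1) j) (p m i)) (p (m - 1) (j + 1)) x) ^ 2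
    with hVdef
  have hV0 : ∀ x, V 0 x = r (m - 1) x := by
    intro x
    simp only [hVdef, hrdef, range_zero, Finset.sum_empty, zero_add, hp0, Nat.max_zero]
  have hVm : ∀ x, V m x = r m x := by
    intro x
    simp only [hVdef, hrdef, hpm]
    have h2 : ∀ j ∈ range (m - 1),
        (ssum n (max (p (m - 1) j) n) (p (m - 1) (j + 1)) x) ^ 2 = 0 := by
      intro j hj
      rw [Finset.mem_range] at hj
      have hle' : p (m - 1) (j + 1) ≤ n := hple (m - 1) (j + 1) hj
      have : Finset.Ico (max (p (m - 1) j) n) (p (m - 1) (j + 1)) = ∅ :=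
        Finset.Ico_eq_empty (by omega)
      simp [ssum, this]
    rw [Finset.sum_congr rfl h2]
    simp
  have htel : ∀ x, r (m - 1) x - r m x = ∑ i ∈ range m, (V i x - V (i + 1) x) := by
    intro x
    rw [Finset.sum_range_sub' (fun i => V i x) m, hV0, hVm]
  -- the main estimate: for every G m-measurable set, the integral of each increment vanishes
  have hmain : ∀ u : Set (Fin n → ℝ),
      MeasurableSet[⨆ (l : ℕ) (_ : m ≤ l ∧ l ≤ n),
        MeasurableSpace.comap (r l) inferInstance] u →
      ∀ i, i < m →
      Integrable (fun ω => V i (Φ ω) - V (i + 1) (Φ ω)) μ ∧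
        ∫ ω in Φ ⁻¹' u, (V i (Φ ω) - V (i + 1) (Φ ω)) ∂μ = 0 := by
    intro u hu i him
    have hVmeas : ∀ i', Measurable (V i') := fun i' =>
      ((Finset.measurable_sum _ fun j _ => (measurable_ssum n _ _).pow_const 2).add
        (Finset.measurable_sum _ fun j _ => (measurable_ssum n _ _).pow_const 2))
    have huMeas : MeasurableSet u := by
      have hsup : (⨆ (l : ℕ) (_ : m ≤ l ∧ l ≤ n),
          MeasurableSpace.comap (r l) inferInstance) ≤ (inferInstance : MeasurableSpace _) :=
        iSup₂_le fun l _ => measurable_iff_comap_le.1 (hrmeas l)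
      exact hsup _ hu
    rcases eq_or_lt_of_le (hmono m (Nat.le_succ i)) with heq | hlt
    · -- degenerate block: the increment is identically zero
      have hzero : ∀ x, V i x - V (i + 1) x = 0 := by
        intro x
        simp only [hVdef, Finset.sum_range_succ, ← heq]
        have : ssum n (p m i) (p m i) x = 0 := by simp [ssum]
        rw [this]
        ring
      constructor
      · have : (fun ω => V i (Φ ω) - V (i + 1) (Φ ω)) = fun _ => (0 : ℝ) :=
          funext fun ω => hzero (Φ ω)
        rw [this]
        exact integrable_const 0
      · refine Eq.trans (setIntegral_congr_fun (hΦ huMeas) fun ω _ => hzero (Φ ω)) ?_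
        simp
    · -- genuine refinement: the increment is an odd cross term
      set t := p m i with htdef
      set t' := p m (i + 1) with ht'def
      have ht'n : t' ≤ n := hple m (i + 1) him
      -- locate the coarse block containing [t, t')
      set J := Nat.findGreatest (fun j => p (m - 1) j ≤ t) (m - 2) with hJdef
      have hJspec : p (m - 1) J ≤ t := by
        rw [hJdef]
        exact @Nat.findGreatest_spec 0 (fun j => p (m - 1) j ≤ t) _ (m - 2) (Nat.zero_le _)
          (by show p (m - 1) 0 ≤ t; rw [hp0]; exact Nat.zero_le t)
      have hJle : J ≤ m - 2 := by
        rw [hJdef]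
        exact Nat.findGreatest_le _
      have hJlt : t < p (m - 1) (J + 1) := by
        by_cases hJm : J + 1 ≤ m - 2
        · by_contra hcon
          push_neg at hcon
          refine @Nat.findGreatest_is_greatest (J + 1) (fun j => p (m - 1) j ≤ t) _ (m - 2)
            ?_ hJm hcon
          rw [hJdef]
          exact Nat.lt_succ_self _
        · have hmm : J + 1 = m - 1 := by omega
          have hJn : p (m - 1) (J + 1) = n := by rw [hmm, hpm]
          rw [hJn]
          have htlt : t < t' := hlt
          have : t' ≤ n := ht'n
          omega
      set w := p (m - 1) (J + 1) with hwdef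
      have hstep : ∃ i', i' ≤ m ∧ p m i' = w := by
        have hJ1 : J + 1 ≤ m - 1 := by omega
        have h := hnested (m - 1) (J + 1) hJ1
        rw [show m - 1 + 1 = m by omega] at h
        obtain ⟨i', hi', he⟩ := h
        exact ⟨i', hi', he⟩
      obtain ⟨i', hi'le, hi'e⟩ := hstep
      have ht'w : t' ≤ w := by
        have hlt' : p m i < p m i' := by rw [hi'e]; exact hJlt
        have hii' : i + 1 ≤ i' := by
          by_contra hcon
          push_neg at hcon
          exact absurd (hmono m (show i' ≤ i by omega)) (not_le.2 hlt')
        calc t' = p m (i + 1) := rfl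
          _ ≤ p m i' := hmono m hii'
          _ = w := hi'e
      -- the cross-term formula
      have hcross : ∀ x, V i x - V (i + 1) x =
          2 * ssum n t t' x * ssum n t' w x := by
        intro x
        have hsingle : ∀ j ∈ range (m - 1), j ≠ J →
            (ssum n (max (p (m - 1) j) t) (p (m - 1) (j + 1)) x) ^ 2 -
              (ssum n (max (p (m - 1) j) t') (p (m - 1) (j + 1)) x) ^ 2 = 0 := by
          intro j hj hne
          rcases lt_or_gt_of_ne hne with hjJ | hjJ
          · have h1 : p (m - 1) (j + 1) ≤ p (m - 1) J :=
              hmono (m - 1) (show j + 1 ≤ J from hjJ)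
            have e1 : Finset.Ico (max (p (m - 1) j) t) (p (m - 1) (j + 1)) = ∅ :=
              Finset.Ico_eq_empty (by omega)
            have e2 : Finset.Ico (max (p (m - 1) j) t') (p (m - 1) (j + 1)) = ∅ :=
              Finset.Ico_eq_empty (by omega)
            simp [ssum, e1, e2]
          · have h1 : w ≤ p (m - 1) j := by
              rw [hwdef]
              exact hmono (m - 1) (show J + 1 ≤ j from hjJ)
            have h2 : max (p (m - 1) j) t = p (m - 1) j := by omega
            have h3 : max (p (m - 1) j) t' = p (m - 1) j := by omega
            rw [h2, h3, sub_self]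
        have hsum : (∑ j ∈ range (m - 1),
            ((ssum n (max (p (m - 1) j) t) (p (m - 1) (j + 1)) x) ^ 2 -
              (ssum n (max (p (m - 1) j) t') (p (m - 1) (j + 1)) x) ^ 2)) =
            (ssum n t w x) ^ 2 - (ssum n t' w x) ^ 2 := by
          rw [Finset.sum_eq_single J hsingle
            (fun hJnot => absurd (Finset.mem_range.2 (by omega)) hJnot)]
          rw [max_eq_right hJspec, max_eq_right (hJspec.trans (le_of_lt hlt)), hwdef]
        have hexpand : V i x - V (i + 1) x =
            (∑ j ∈ range (m - 1),
              ((ssum n (max (p (m - 1) j) t) (p (m - 1) (j + 1)) x) ^ 2 -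
                (ssum n (max (p (m - 1) j) t') (p (m - 1) (j + 1)) x) ^ 2)) -
              (ssum n t t' x) ^ 2 := by
          simp only [hVdef, Finset.sum_range_succ, Finset.sum_sub_distrib, ← htdef, ← ht'def]
          ring
        have hsplit : ssum n t t' x + ssum n t' w x = ssum n t w x := by
          unfold NestedRVAux.ssum
          exact Finset.sum_Ico_consecutive _ (le_of_lt hlt) ht'w
        rw [hexpand, hsum, ← hsplit]
        ring
      -- the sign flip on coordinates in [t, t')
      set F := sflip n t t' with hFdef
      have hFpres : MeasurePreserving F (Measure.pi νf) (Measure.pi νf) := by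
        have hco : ∀ k : Fin n,
            MeasurePreserving (fun y : ℝ => if t ≤ (k : ℕ) ∧ (k : ℕ) < t' then -y else y)
              (νf k) (νf k) := by
          intro k
          by_cases hk : t ≤ (k : ℕ) ∧ (k : ℕ) < t'
          · simp only [if_pos hk]
            refine ⟨measurable_neg, ?_⟩
            have h1 : Measure.map (fun y : ℝ => -y) (Measure.map (ξ k) μ) =
                Measure.map (fun ω => -ξ k ω) μ :=
              Measure.map_map measurable_neg (hm k)
            rw [hνf, h1, ← hsymm k]
          · simp only [if_neg hk]
            exact MeasurePreserving.id _
        have := measurePreserving_pi νf νf hco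
        exact this
      -- the finer realized variances are invariant under the flip
      have hrinv : ∀ l, m ≤ l → ∀ x, r l (F x) = r l x := by
        intro l hl x
        obtain ⟨ju, hju, hjut⟩ := hdiv l hl i (le_of_lt him)
        obtain ⟨jv, hjv, hjvt⟩ := hdiv l hl (i + 1) him
        refine Finset.sum_congr rfl fun j hj => ?_
        rw [Finset.mem_range] at hj
        by_cases hcap : ∃ k, p l j ≤ k ∧ k < p l (j + 1) ∧ t ≤ k ∧ k < t'
        · obtain ⟨k0, hk1, hk2, hk3, hk4⟩ := hcap
          have hta : t ≤ p l j := by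
            by_contra hcon
            push_neg at hcon
            have hjju : j < ju := by
              by_contra h2
              push_neg at h2
              have h3 : p l ju ≤ p l j := hmono l h2
              rw [hjut] at h3
              omega
            have h4 : p l (j + 1) ≤ p l ju := hmono l (show j + 1 ≤ ju from hjju)
            rw [hjut] at h4
            omega
          have hbt' : p l (j + 1) ≤ t' := by
            by_contra hcon
            push_neg at hcon
            have hjvj : jv ≤ j := by
              by_contra h2
              push_neg at h2
              have h3 : p l (j + 1) ≤ p l jv := hmono l (show j + 1 ≤ jv from h2)
              rw [hjvt] at h3
              omega
            have h4 : p l jv ≤ p l j := hmono l hjvj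
            rw [hjvt] at h4
            omega
          rw [hFdef, ssum_sflip_neg x hta hbt', neg_sq]
        · push_neg at hcap
          rw [hFdef, ssum_sflip_eq x fun k hk1 hk2 hk34 =>
            absurd (hcap k hk1 hk2 hk34.1) (not_le.2 hk34.2)]
      -- the increment is odd under the flip
      have hanti : ∀ x, V i (F x) - V (i + 1) (F x) = -(V i x - V (i + 1) x) := by
        intro x
        rw [hcross (F x), hcross x, hFdef,
          ssum_sflip_neg x le_rfl le_rfl,
          ssum_sflip_eq x (fun k hk1 _ hk34 => absurd (hk1.trans_lt hk34.2) (lt_irrefl _))]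
        ring
      -- u is invariant under the flip
      have hFinvu : F ⁻¹' u = u := by
        have hinv : (⨆ (l : ℕ) (_ : m ≤ l ∧ l ≤ n),
            MeasurableSpace.comap (r l) inferInstance) ≤ invariants F := by
          refine iSup₂_le fun l hl => ?_
          rintro v ⟨w', hw', rfl⟩
          refine ⟨(hrmeas l) hw', ?_⟩
          have hcomp : r l ∘ F = r l := funext (hrinv l hl.1)
          calc F ⁻¹' (r l ⁻¹' w') = (r l ∘ F) ⁻¹' w' := rfl
            _ = r l ⁻¹' w' := by rw [hcomp]
        exact (hinv _ hu).2
      -- integrability of the cross term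
      have hwn : w ≤ n := by
        rw [hwdef]
        by_cases hJ1 : J + 1 ≤ m - 1
        · exact hple (m - 1) (J + 1) hJ1
        · have : J + 1 = m - 1 := by omega
          rw [this, hpm]
      have hptw : ∀ ω, V i (Φ ω) - V (i + 1) (Φ ω) =
          2 * (∑ k ∈ Ico t t', ξ k ω) * (∑ k ∈ Ico t' w, ξ k ω) := by
        intro ω
        rw [hcross (Φ ω), hssumΦ t t' ht'n ω, hssumΦ t' w hwn ω]
      have hintg : Integrable (fun ω => V i (Φ ω) - V (i + 1) (Φ ω)) μ := by
        have h1 : Integrable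
            (fun ω => (∑ k ∈ Ico t t', ξ k ω) * (∑ k ∈ Ico t' w, ξ k ω)) μ :=
          hmul _ _ (hSL2 t t') (hSL2 t' w)
        have h2 := h1.const_mul 2
        refine h2.congr (Filter.Eventually.of_forall fun ω => ?_)
        show 2 * ((∑ k ∈ Ico t t', ξ k ω) * (∑ k ∈ Ico t' w, ξ k ω)) =
          V i (Φ ω) - V (i + 1) (Φ ω)
        rw [hptw ω]
        ring
      refine ⟨hintg, ?_⟩
      -- transfer to the product space and use the flip
      have hVi : Measurable (fun x => V i x - V (i + 1) x) :=
        (hVmeas i).sub (hVmeas (i + 1))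
      have htrans : ∫ ω in Φ ⁻¹' u, (V i (Φ ω) - V (i + 1) (Φ ω)) ∂μ =
          ∫ x in u, (V i x - V (i + 1) x) ∂(Measure.pi νf) := by
        rw [← hmap]
        exact (setIntegral_map huMeas
          (hVi.aestronglyMeasurable) hΦ.aemeasurable).symm
      rw [htrans]
      have hneg : ∫ x in u, (V i x - V (i + 1) x) ∂(Measure.pi νf) =
          -∫ x in u, (V i x - V (i + 1) x) ∂(Measure.pi νf) := by
        conv_lhs => rw [← hFpres.map_eq]
        rw [setIntegral_map huMeas hVi.aestronglyMeasurable
          hFpres.measurable.aemeasurable, hFinvu]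
        rw [show (fun x => V i (F x) - V (i + 1) (F x)) = fun x => -(V i x - V (i + 1) x)
          from funext hanti]
        rw [integral_neg]
      linarith
  -- put the pieces together: the conditional expectation of the increment vanishes
  have hsubint : Integrable (fun ω => R (m - 1) ω - R m ω) μ := (hRint (m - 1)).sub (hRint m)
  have hGeq : G m = MeasurableSpace.comap Φ (⨆ (l : ℕ) (_ : m ≤ l ∧ l ≤ n),
      MeasurableSpace.comap (r l) inferInstance) := by
    rw [hG, MeasurableSpace.comap_iSup]
    refine iSup_congr fun l => ?_
    rw [MeasurableSpace.comap_iSup]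
    refine iSup_congr fun _ => ?_
    rw [MeasurableSpace.comap_comp]
    congr 1
    exact funext fun ω => hRr l ω
  have hkey : (fun _ => (0 : ℝ)) =ᵐ[μ] μ[(fun ω => R (m - 1) ω - R m ω) | G m] := by
    refine ae_eq_condExp_of_forall_setIntegral_eq hGle hsubint
      (fun s _ _ => integrableOn_zero) (fun s hs _ => ?_)
      (StronglyMeasurable.aestronglyMeasurable (@stronglyMeasurable_const _ _ (G m) _ 0))
    rw [hGeq] at hs
    obtain ⟨u, hu, rfl⟩ := hs
    have heqsum : (fun ω => R (m - 1) ω - R m ω) =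
        fun ω => ∑ i ∈ range m, (V i (Φ ω) - V (i + 1) (Φ ω)) := by
      funext ω
      rw [hRr (m - 1) ω, hRr m ω, htel (Φ ω)]
    rw [heqsum]
    rw [integral_finset_sum _ fun i hi =>
      ((hmain u hu i (Finset.mem_range.1 hi)).1).integrableOn]
    rw [Finset.sum_eq_zero fun i hi => (hmain u hu i (Finset.mem_range.1 hi)).2]
    simp
  -- conclude
  have hcm : μ[R m | G m] = R m := condExp_of_stronglyMeasurable hGle hRmG (hRint m)
  have hsplit : R (m - 1) = (fun ω => R (m - 1) ω - R m ω) + R m := by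
    funext ω
    simp
  calc μ[R (m - 1) | G m] = μ[(fun ω => R (m - 1) ω - R m ω) + R m | G m] := by rw [← hsplit]
    _ =ᵐ[μ] μ[(fun ω => R (m - 1) ω - R m ω) | G m] + μ[R m | G m] :=
        condExp_add hsubint (hRint m) (G m)
    _ =ᵐ[μ] (fun _ => (0 : ℝ)) + R m := by
        rw [hcm]
        exact Filter.EventuallyEq.add hkey.symm Filter.EventuallyEq.rfl
    _ = R m := by
        funext ω
        simp
end
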